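/- arXiv:2012.05169 — 4 statements merged into one kernel-verified Lean document; each statement's English description precedes it below -/
import Mathlib

section
/- Let Y ∈ ℝ^{n×d} be a data matrix, x* ∈ ℝ^n a label vector, and β > 0. Let D_1, …, D_ℓ enumerate the set of ReLU sign-pattern matrices of Y. Let p*_m denote the optimal value of the non-convex primal training problem with m neurons, and let d* denote the optimal value of the convex dual program: d* = inf over (w_i, z_i)_{i=1}^ℓ in ℝ^d with (2D_i − I)Y w_i ≥ 0 and (2D_i − I)Y z_i ≥ 0 componentwise for every i, of (1/2)‖Σ_{i=1}^ℓ D_i Y (w_i − z_i) − x*‖_2² + β Σ_{i=1}^ℓ (‖w_i‖_2 + ‖z_i‖_2). Then there exists m* ≤ n such that for every m ≥ m* + 1, p*_m = d*. -/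
open Matrix Finset

noncomputable section

/-- Euclidean (ℓ2) norm of a vector in ℝ^k. -/
def l2 {k : ℕ} (x : Fin k → ℝ) : ℝ := Real.sqrt (∑ i, (x i) ^ 2)

/-- Componentwise ReLU. -/
def relu {k : ℕ} (x : Fin k → ℝ) : Fin k → ℝ := fun i => max (x i) 0

/-- The set of ReLU sign-pattern matrices of `Y`: diagonal 0/1 matrices
`Diag(1_{Yu ≥ 0})` as `u` ranges over the closed unit ball. -/
def signPatterns {n d : ℕ} (Y : Matrix (Fin n) (Fin d) ℝ) :
    Set (Matrix (Fin n) (Fin n) ℝ) :=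
  { M | ∃ u : Fin d → ℝ, l2 u ≤ 1 ∧
      M = Matrix.diagonal (fun i => if 0 ≤ Y.mulVec u i then (1 : ℝ) else 0) }

/-- Primal (non-convex) training objective with `m` neurons. -/
def primalObj {n d : ℕ} (Y : Matrix (Fin n) (Fin d) ℝ) (xs : Fin n → ℝ) (β : ℝ)
    (m : ℕ) (u : Fin m → Fin d → ℝ) (v : Fin m → ℝ) : ℝ :=
  (1 / 2) * l2 ((∑ j, v j • relu (Y.mulVec (u j))) - xs) ^ 2
    + (β / 2) * ∑ j, (l2 (u j) ^ 2 + |v j| ^ 2)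

/-- Optimal value of the primal training problem with `m` neurons. -/
def pStar {n d : ℕ} (Y : Matrix (Fin n) (Fin d) ℝ) (xs : Fin n → ℝ) (β : ℝ)
    (m : ℕ) : ℝ :=
  sInf { c | ∃ u : Fin m → Fin d → ℝ, ∃ v : Fin m → ℝ, c = primalObj Y xs β m u v }

/-- Dual feasibility: `(2 Dᵢ − I) Y wᵢ ≥ 0` componentwise for every `i`. -/
def dualFeasible {n d ℓ : ℕ} (Y : Matrix (Fin n) (Fin d) ℝ)
    (D : Fin ℓ → Matrix (Fin n) (Fin n) ℝ) (w : Fin ℓ → Fin d → ℝ) : Prop :=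
  ∀ i j, 0 ≤ ((2 • D i - 1).mulVec (Y.mulVec (w i))) j

/-- Convex dual objective. -/
def dualObj {n d ℓ : ℕ} (Y : Matrix (Fin n) (Fin d) ℝ) (xs : Fin n → ℝ) (β : ℝ)
    (D : Fin ℓ → Matrix (Fin n) (Fin n) ℝ) (w z : Fin ℓ → Fin d → ℝ) : ℝ :=
  (1 / 2) * l2 ((∑ i, (D i).mulVec (Y.mulVec (w i - z i))) - xs) ^ 2
    + β * ∑ i, (l2 (w i) + l2 (z i))

/-- Optimal value of the convex dual program. -/
def dStar {n d ℓ : ℕ} (Y : Matrix (Fin n) (Fin d) ℝ) (xs : Fin n → ℝ) (β : ℝ)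
    (D : Fin ℓ → Matrix (Fin n) (Fin n) ℝ) : ℝ :=
  sInf { c | ∃ w z : Fin ℓ → Fin d → ℝ,
    dualFeasible Y D w ∧ dualFeasible Y D z ∧ c = dualObj Y xs β D w z }

end


noncomputable section
open Matrix Finset

/-! ### l2 lemmas -/

lemma l2_eq_norm {k : ℕ} (x : Fin k → ℝ) :
    l2 x = ‖(WithLp.equiv 2 (Fin k → ℝ)).symm x‖ := by
  rw [EuclideanSpace.norm_eq]
  simp [l2, Real.norm_eq_abs, sq_abs, PiLp.toLp_apply]

lemma l2_nonneg {k : ℕ} (x : Fin k → ℝ) : 0 ≤ l2 x := Real.sqrt_nonneg _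

lemma l2_zero {k : ℕ} : l2 (0 : Fin k → ℝ) = 0 := by simp [l2]

lemma l2_sq {k : ℕ} (x : Fin k → ℝ) : l2 x ^ 2 = ∑ i, (x i) ^ 2 :=
  Real.sq_sqrt (by positivity)

lemma l2_smul {k : ℕ} (c : ℝ) (x : Fin k → ℝ) : l2 (c • x) = |c| * l2 x := by
  rw [l2_eq_norm, l2_eq_norm, ← Real.norm_eq_abs, ← norm_smul]
  congr 1

lemma l2_eq_zero_iff {k : ℕ} (x : Fin k → ℝ) : l2 x = 0 ↔ x = 0 := by
  rw [l2_eq_norm, norm_eq_zero]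
  constructor
  · intro h; have := congrArg (WithLp.equiv 2 (Fin k → ℝ)) h; simpa using this
  · intro h; simp [h]

lemma l2_sum_le {k : ℕ} {ι : Type*} (s : Finset ι) (f : ι → Fin k → ℝ) :
    l2 (∑ i ∈ s, f i) ≤ ∑ i ∈ s, l2 (f i) := by
  have : (WithLp.equiv 2 (Fin k → ℝ)).symm (∑ i ∈ s, f i)
      = ∑ i ∈ s, (WithLp.equiv 2 (Fin k → ℝ)).symm (f i) := by
    exact WithLp.toLp_sum (p := 2) (s := s) (f := f)
  rw [l2_eq_norm, this]
  refine le_trans (norm_sum_le _ _) ?_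
  exact Finset.sum_le_sum fun i _ => le_of_eq (l2_eq_norm (f i)).symm

lemma l2_pos {k : ℕ} {x : Fin k → ℝ} (hx : x ≠ 0) : 0 < l2 x :=
  lt_of_le_of_ne (l2_nonneg x) (fun h => hx ((l2_eq_zero_iff x).mp h.symm))

/-! ### relu and sign-pattern lemmas -/

lemma relu_smul {k : ℕ} {c : ℝ} (hc : 0 ≤ c) (x : Fin k → ℝ) :
    relu (c • x) = c • relu x := by
  funext i
  simp only [relu, Pi.smul_apply, smul_eq_mul]
  rw [mul_max_of_nonneg _ _ hc, mul_zero]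

lemma relu_zero {k : ℕ} : relu (0 : Fin k → ℝ) = 0 := by
  funext i; simp [relu]

lemma mulVec_sum {n k : ℕ} {ι : Type*} (A : Matrix (Fin n) (Fin k) ℝ)
    (s : Finset ι) (f : ι → Fin k → ℝ) :
    A.mulVec (∑ i ∈ s, f i) = ∑ i ∈ s, A.mulVec (f i) := by
  have := map_sum A.mulVecLin f s
  rw [show A.mulVec (∑ i ∈ s, f i) = A.mulVecLin (∑ i ∈ s, f i) from rfl, this]
  exact Finset.sum_congr rfl fun i _ => rfl

section Pat
variable {n d : ℕ} (Y : Matrix (Fin n) (Fin d) ℝ)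

lemma twoSmul_diag_mulVec (f : Fin n → ℝ) (v : Fin n → ℝ) (j : Fin n) :
    ((2 • Matrix.diagonal f - 1).mulVec v) j = 2 * (f j * v j) - v j := by
  rw [Matrix.sub_mulVec, two_smul, Matrix.add_mulVec, Matrix.one_mulVec]
  simp [Matrix.mulVec_diagonal, two_mul]

def patMat (u : Fin d → ℝ) : Matrix (Fin n) (Fin n) ℝ :=
  Matrix.diagonal (fun i => if 0 ≤ Y.mulVec u i then (1 : ℝ) else 0)

lemma patMat_smul {c : ℝ} (hc : 0 < c) (u : Fin d → ℝ) :
    patMat Y (c • u) = patMat Y u := by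
  unfold patMat
  have : ∀ i, (if 0 ≤ (Y *ᵥ (c • u)) i then (1:ℝ) else 0)
      = if 0 ≤ (Y *ᵥ u) i then (1:ℝ) else 0 := by
    intro i
    rw [Matrix.mulVec_smul]
    simp only [Pi.smul_apply, smul_eq_mul]
    exact if_congr (mul_nonneg_iff_of_pos_left hc) rfl rfl
  exact congrArg _ (funext this)

lemma patMat_mem (u : Fin d → ℝ) : patMat Y u ∈ signPatterns Y := by
  by_cases hu : u = 0
  · exact ⟨0, by rw [(l2_eq_zero_iff (0 : Fin d → ℝ)).mpr rfl]; norm_num, by rw [hu]; rfl⟩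
  · refine ⟨(l2 u)⁻¹ • u, ?_, ?_⟩
    · rw [l2_smul, abs_of_nonneg (inv_nonneg.mpr (l2_nonneg u)),
        inv_mul_cancel₀ (ne_of_gt (l2_pos hu))]
    · have := patMat_smul Y (inv_pos.mpr (l2_pos hu)) u
      unfold patMat at this
      exact this.symm

lemma patMat_feas (u : Fin d → ℝ) (j : Fin n) :
    0 ≤ ((2 • patMat Y u - 1).mulVec (Y.mulVec u)) j := by
  rw [patMat, twoSmul_diag_mulVec]
  by_cases h : 0 ≤ Y.mulVec u j
  · rw [if_pos h]; linarith
  · rw [if_neg h]; push_neg at h; linarith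

lemma relu_eq_patMat_mulVec (u : Fin d → ℝ) :
    relu (Y.mulVec u) = (patMat Y u).mulVec (Y.mulVec u) := by
  funext j
  rw [patMat, Matrix.mulVec_diagonal]
  by_cases h : 0 ≤ Y.mulVec u j
  · rw [if_pos h, one_mul]; exact max_eq_left h
  · rw [if_neg h, zero_mul]; push_neg at h; exact max_eq_right h.le

lemma relu_of_feas {f : Fin n → ℝ} (hf : ∀ j, f j = 0 ∨ f j = 1)
    {v : Fin n → ℝ} (h : ∀ j, 0 ≤ ((2 • Matrix.diagonal f - 1).mulVec v) j) :
    (Matrix.diagonal f).mulVec v = relu v := by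
  funext j
  have hj := h j
  rw [twoSmul_diag_mulVec] at hj
  rw [Matrix.mulVec_diagonal]
  rcases hf j with h0 | h1
  · rw [h0] at hj ⊢
    rw [zero_mul]
    have : v j ≤ 0 := by linarith
    exact (max_eq_right this).symm
  · rw [h1] at hj ⊢
    rw [one_mul]
    have : 0 ≤ v j := by linarith
    exact (max_eq_left this).symm

end Pat

/-! ### conic Caratheodory -/

lemma conic_caratheodory {V : Type*} [AddCommGroup V] [Module ℝ V]
    [FiniteDimensional ℝ V] {ι : Type*} [DecidableEq ι] (g : ι → V) :
    ∀ (t : Finset ι) (c : ι → ℝ), (∀ i ∈ t, 0 ≤ c i) →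
    ∃ (s : Finset ι) (c' : ι → ℝ), s ⊆ t ∧ s.card ≤ Module.finrank ℝ V ∧
      (∀ i ∈ s, 0 ≤ c' i) ∧ ∑ i ∈ s, c' i • g i = ∑ i ∈ t, c i • g i := by
  intro t
  induction t using Finset.strongInductionOn with
  | _ t ih =>
    intro c hc
    by_cases hcard : t.card ≤ Module.finrank ℝ V
    · exact ⟨t, c, Finset.Subset.refl t, hcard, hc, rfl⟩
    · push_neg at hcard
      have hnli : ¬ LinearIndependent ℝ (fun i : ↥t => g i) := by
        intro hli
        have := hli.fintype_card_le_finrank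
        rw [Fintype.card_coe] at this
        omega
      obtain ⟨d0, hd0sum, i0, hi0⟩ := Fintype.not_linearIndependent_iff.mp hnli
      set d1 : ι → ℝ := fun i => if h : i ∈ t then d0 ⟨i, h⟩ else 0 with hd1
      have hd1sum : ∑ i ∈ t, d1 i • g i = 0 := by
        rw [← Finset.sum_coe_sort]
        rw [← hd0sum]
        apply Finset.sum_congr rfl
        intro i _
        simp [hd1, i.2]
      have hd1i0 : d1 (i0 : ι) ≠ 0 := by simp only [hd1, dif_pos i0.2]; exact hi0
      obtain ⟨e, hesum, j0, hj0t, hj0⟩ :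
          ∃ e : ι → ℝ, ∑ i ∈ t, e i • g i = 0 ∧ ∃ j ∈ t, 0 < e j := by
        rcases lt_or_gt_of_ne hd1i0 with hneg | hpos
        · refine ⟨-d1, ?_, i0, i0.2, by simpa using hneg⟩
          simp only [Pi.neg_apply, neg_smul, Finset.sum_neg_distrib, hd1sum, neg_zero]
        · exact ⟨d1, hd1sum, i0, i0.2, hpos⟩
      have hPne : (t.filter (fun i => 0 < e i)).Nonempty :=
        ⟨j0, Finset.mem_filter.mpr ⟨hj0t, hj0⟩⟩
      obtain ⟨i1, hi1mem, hi1min⟩ :=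
        Finset.exists_min_image (t.filter (fun i => 0 < e i)) (fun i => c i / e i) hPne
      rw [Finset.mem_filter] at hi1mem
      obtain ⟨hi1t, hi1pos⟩ := hi1mem
      set lam := c i1 / e i1 with hlam
      have hlam0 : 0 ≤ lam := div_nonneg (hc i1 hi1t) hi1pos.le
      set c2 : ι → ℝ := fun i => c i - lam * e i with hc2
      have hc2nn : ∀ i ∈ t, 0 ≤ c2 i := by
        intro i hit
        simp only [hc2]
        rcases le_or_gt (e i) 0 with he | he
        · have : lam * e i ≤ 0 := mul_nonpos_of_nonneg_of_nonpos hlam0 he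
          linarith [hc i hit]
        · have := hi1min i (Finset.mem_filter.mpr ⟨hit, he⟩)
          rw [hlam]
          rw [div_le_div_iff₀ hi1pos he] at this
          have h2 : c i1 / e i1 * e i ≤ c i := by
            rw [div_mul_eq_mul_div, div_le_iff₀ hi1pos]
            linarith
          linarith
      have hc2i1 : c2 i1 = 0 := by
        simp only [hc2, hlam]
        field_simp
        ring
      have hsum2 : ∑ i ∈ t, c2 i • g i = ∑ i ∈ t, c i • g i := by
        have hsl : ∑ i ∈ t, (lam * e i) • g i = lam • ∑ i ∈ t, e i • g i := by
          rw [Finset.smul_sum]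
          exact Finset.sum_congr rfl fun i _ => mul_smul lam (e i) (g i)
        calc ∑ i ∈ t, c2 i • g i
            = ∑ i ∈ t, (c i • g i - (lam * e i) • g i) :=
              Finset.sum_congr rfl fun i _ => by rw [hc2]; rw [sub_smul]
          _ = ∑ i ∈ t, c i • g i - ∑ i ∈ t, (lam * e i) • g i := Finset.sum_sub_distrib _ _
          _ = ∑ i ∈ t, c i • g i := by rw [hsl, hesum, smul_zero, sub_zero]
      have herase : ∑ i ∈ t.erase i1, c2 i • g i = ∑ i ∈ t, c2 i • g i :=
        Finset.sum_erase t (by rw [hc2i1, zero_smul])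
      obtain ⟨s, c', hsub, hcard', hnn, hsum'⟩ :=
        ih (t.erase i1) (Finset.erase_ssubset hi1t) c2
          (fun i hi => hc2nn i (Finset.mem_of_mem_erase hi))
      exact ⟨s, c', hsub.trans (Finset.erase_subset i1 t), hcard', hnn,
        by rw [hsum', herase, hsum2]⟩

/-! ### padding -/

lemma exists_pad {σ : Type*} [Fintype σ] [DecidableEq σ] {d m : ℕ}
    (s : Finset σ) (hm : s.card ≤ m) {A : Type*} [AddCommMonoid A]
    (U : σ → Fin d → ℝ) (V : σ → ℝ) (f : (Fin d → ℝ) → ℝ → A) (hf : f 0 0 = 0) :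
    ∃ (u : Fin m → Fin d → ℝ) (v : Fin m → ℝ),
      ∑ j, f (u j) (v j) = ∑ k ∈ s, f (U k) (V k) := by
  classical
  set e : Fin s.card ≃ {x // x ∈ s} := s.equivFin.symm with he
  refine ⟨fun j => if h : (j : ℕ) < s.card then U (e ⟨j, h⟩) else 0,
          fun j => if h : (j : ℕ) < s.card then V (e ⟨j, h⟩) else 0, ?_⟩
  set g : ℕ → A := fun i => if h : i < s.card then f (U (e ⟨i, h⟩)) (V (e ⟨i, h⟩)) else 0
    with hg
  have h1 : ∑ j : Fin m,
      f (if h : (j : ℕ) < s.card then U (e ⟨j, h⟩) else 0)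
        (if h : (j : ℕ) < s.card then V (e ⟨j, h⟩) else 0) = ∑ j : Fin m, g (j : ℕ) := by
    apply Finset.sum_congr rfl
    intro j _
    by_cases h : (j : ℕ) < s.card
    · rw [dif_pos h, dif_pos h]; simp only [hg]; rw [dif_pos h]
    · rw [dif_neg h, dif_neg h]; simp only [hg]; rw [dif_neg h]; exact hf
  rw [h1, Fin.sum_univ_eq_sum_range g m,
    ← Finset.sum_subset (Finset.range_subset_range.mpr hm)
      (fun x _ hx => dif_neg (by simpa using hx)),
    ← Fin.sum_univ_eq_sum_range g s.card]
  have h2 : ∑ j : Fin s.card, g (j : ℕ) = ∑ j : Fin s.card, f (U (e j)) (V (e j)) := by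
    apply Finset.sum_congr rfl
    intro j _
    simp only [hg]
    simp only [dif_pos j.2, Fin.eta]
  rw [h2, Equiv.sum_comp e (fun i : {x // x ∈ s} => f (U i) (V i))]
  exact Finset.sum_coe_sort s (fun k => f (U k) (V k))

end
noncomputable section
open Matrix Finset

lemma dualObj_nonneg {n d ℓ : ℕ} (Y : Matrix (Fin n) (Fin d) ℝ) (xs : Fin n → ℝ)
    {β : ℝ} (hβ : 0 < β) (D : Fin ℓ → Matrix (Fin n) (Fin n) ℝ)
    (w z : Fin ℓ → Fin d → ℝ) : 0 ≤ dualObj Y xs β D w z := by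
  unfold dualObj
  apply add_nonneg
  · positivity
  · apply mul_nonneg hβ.le
    exact Finset.sum_nonneg fun i _ => add_nonneg (l2_nonneg _) (l2_nonneg _)

lemma primalObj_nonneg {n d : ℕ} (Y : Matrix (Fin n) (Fin d) ℝ) (xs : Fin n → ℝ)
    {β : ℝ} (hβ : 0 < β) (m : ℕ) (u : Fin m → Fin d → ℝ) (v : Fin m → ℝ) :
    0 ≤ primalObj Y xs β m u v := by
  unfold primalObj
  apply add_nonneg
  · positivity
  · apply mul_nonneg (by linarith)
    exact Finset.sum_nonneg fun j _ => add_nonneg (by positivity) (by positivity)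

lemma dStar_le_primalObj {n d ℓ : ℕ} (Y : Matrix (Fin n) (Fin d) ℝ) (xs : Fin n → ℝ)
    {β : ℝ} (hβ : 0 < β) (D : Fin ℓ → Matrix (Fin n) (Fin n) ℝ)
    (hrange : Set.range D = signPatterns Y) (m : ℕ)
    (u : Fin m → Fin d → ℝ) (v : Fin m → ℝ) :
    dStar Y xs β D ≤ primalObj Y xs β m u v := by
  classical
  have hex : ∀ j : Fin m, ∃ i, D i = patMat Y (u j) := by
    intro j
    have h1 : patMat Y (u j) ∈ Set.range D := by rw [hrange]; exact patMat_mem Y (u j)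
    exact h1
  choose idx hidx using hex
  set w : Fin ℓ → Fin d → ℝ :=
    fun i => ∑ j ∈ univ.filter (fun j => idx j = i ∧ 0 ≤ v j), v j • u j with hw
  set z : Fin ℓ → Fin d → ℝ :=
    fun i => ∑ j ∈ univ.filter (fun j => idx j = i ∧ ¬ 0 ≤ v j), (-(v j)) • u j with hz
  -- feasibility
  have hfw : dualFeasible Y D w := by
    intro i k
    rw [hw]
    simp only
    rw [mulVec_sum, mulVec_sum, Finset.sum_apply]
    apply Finset.sum_nonneg
    intro j hj
    rw [Finset.mem_filter] at hj
    obtain ⟨-, hji, hvj⟩ := hj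
    rw [Matrix.mulVec_smul, Matrix.mulVec_smul, Pi.smul_apply, smul_eq_mul]
    apply mul_nonneg hvj
    rw [← hji, hidx j]
    exact patMat_feas Y (u j) k
  have hfz : dualFeasible Y D z := by
    intro i k
    rw [hz]
    simp only
    rw [mulVec_sum, mulVec_sum, Finset.sum_apply]
    apply Finset.sum_nonneg
    intro j hj
    rw [Finset.mem_filter] at hj
    obtain ⟨-, hji, hvj⟩ := hj
    rw [Matrix.mulVec_smul, Matrix.mulVec_smul, Pi.smul_apply, smul_eq_mul]
    apply mul_nonneg (by push_neg at hvj; linarith)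
    rw [← hji, hidx j]
    exact patMat_feas Y (u j) k
  -- output equality
  have hwz : ∀ i, w i - z i = ∑ j ∈ univ.filter (fun j => idx j = i), v j • u j := by
    intro i
    rw [hw, hz]
    simp only
    rw [← Finset.sum_filter_add_sum_filter_not (univ.filter (fun j => idx j = i))
      (fun j => 0 ≤ v j) (fun j => v j • u j), Finset.filter_filter, Finset.filter_filter]
    have hneg : ∑ j ∈ univ.filter (fun j => idx j = i ∧ ¬ 0 ≤ v j), (-(v j)) • u j
        = - ∑ j ∈ univ.filter (fun j => idx j = i ∧ ¬ 0 ≤ v j), v j • u j := by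
      rw [← Finset.sum_neg_distrib]
      exact Finset.sum_congr rfl fun j _ => by rw [neg_smul]
    rw [hneg, sub_neg_eq_add]
  have hout : ∑ i, (D i).mulVec (Y.mulVec (w i - z i))
      = ∑ j, v j • relu (Y.mulVec (u j)) := by
    calc ∑ i, (D i).mulVec (Y.mulVec (w i - z i))
        = ∑ i, ∑ j ∈ univ.filter (fun j => idx j = i), v j • relu (Y.mulVec (u j)) := by
          apply Finset.sum_congr rfl
          intro i _
          rw [hwz i, mulVec_sum, mulVec_sum]
          apply Finset.sum_congr rfl
          intro j hj
          rw [Finset.mem_filter] at hj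
          rw [Matrix.mulVec_smul, Matrix.mulVec_smul]
          congr 1
          rw [← hj.2, hidx j, ← relu_eq_patMat_mulVec]
      _ = ∑ j, v j • relu (Y.mulVec (u j)) :=
          Finset.sum_fiberwise univ idx (fun j => v j • relu (Y.mulVec (u j)))
  -- cost bound
  have hcost : ∑ i, (l2 (w i) + l2 (z i)) ≤ ∑ j, |v j| * l2 (u j) := by
    have h1 : ∀ i, l2 (w i) ≤ ∑ j ∈ univ.filter (fun j => idx j = i ∧ 0 ≤ v j),
        |v j| * l2 (u j) := by
      intro i
      rw [hw]
      refine le_trans (l2_sum_le _ _) (le_of_eq ?_)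
      exact Finset.sum_congr rfl fun j _ => l2_smul _ _
    have h2 : ∀ i, l2 (z i) ≤ ∑ j ∈ univ.filter (fun j => idx j = i ∧ ¬ 0 ≤ v j),
        |v j| * l2 (u j) := by
      intro i
      rw [hz]
      refine le_trans (l2_sum_le _ _) (le_of_eq ?_)
      refine Finset.sum_congr rfl fun j _ => ?_
      rw [l2_smul, abs_neg]
    calc ∑ i, (l2 (w i) + l2 (z i))
        ≤ ∑ i, (∑ j ∈ univ.filter (fun j => idx j = i ∧ 0 ≤ v j), |v j| * l2 (u j)
          + ∑ j ∈ univ.filter (fun j => idx j = i ∧ ¬ 0 ≤ v j), |v j| * l2 (u j)) :=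
          Finset.sum_le_sum fun i _ => add_le_add (h1 i) (h2 i)
      _ = ∑ i, ∑ j ∈ univ.filter (fun j => idx j = i), |v j| * l2 (u j) := by
          refine Finset.sum_congr rfl fun i _ => ?_
          rw [← Finset.sum_filter_add_sum_filter_not (univ.filter (fun j => idx j = i))
            (fun j => 0 ≤ v j) (fun j => |v j| * l2 (u j)),
            Finset.filter_filter, Finset.filter_filter]
      _ = ∑ j, |v j| * l2 (u j) :=
          Finset.sum_fiberwise univ idx (fun j => |v j| * l2 (u j))
  have hAM : ∑ j, |v j| * l2 (u j) ≤ (1/2) * ∑ j, (l2 (u j) ^ 2 + |v j| ^ 2) := by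
    rw [Finset.mul_sum]
    refine Finset.sum_le_sum fun j _ => ?_
    nlinarith [two_mul_le_add_sq (l2 (u j)) |v j|]
  -- conclude
  have hle : dualObj Y xs β D w z ≤ primalObj Y xs β m u v := by
    unfold dualObj primalObj
    rw [hout]
    have hq : β * ∑ i, (l2 (w i) + l2 (z i)) ≤ β / 2 * ∑ j, (l2 (u j) ^ 2 + |v j| ^ 2) := by
      nlinarith [hcost, hAM]
    linarith
  refine le_trans (csInf_le ?_ ⟨w, z, hfw, hfz, rfl⟩) hle
  refine ⟨0, ?_⟩
  rintro c ⟨w', z', -, -, rfl⟩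
  exact dualObj_nonneg Y xs hβ D w' z'

lemma dStar_le_pStar {n d ℓ : ℕ} (Y : Matrix (Fin n) (Fin d) ℝ) (xs : Fin n → ℝ)
    {β : ℝ} (hβ : 0 < β) (D : Fin ℓ → Matrix (Fin n) (Fin n) ℝ)
    (hrange : Set.range D = signPatterns Y) (m : ℕ) :
    dStar Y xs β D ≤ pStar Y xs β m := by
  refine le_csInf ⟨primalObj Y xs β m 0 0, 0, 0, rfl⟩ ?_
  rintro c ⟨u, v, rfl⟩
  exact dStar_le_primalObj Y xs hβ D hrange m u v

end

noncomputable section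
open Matrix Finset

lemma pStar_le_dualObj {n d ℓ : ℕ} (Y : Matrix (Fin n) (Fin d) ℝ) (xs : Fin n → ℝ)
    {β : ℝ} (hβ : 0 < β) (D : Fin ℓ → Matrix (Fin n) (Fin n) ℝ)
    (hrange : Set.range D = signPatterns Y) {m : ℕ} (hm : n + 1 ≤ m)
    {w z : Fin ℓ → Fin d → ℝ} (hfw : dualFeasible Y D w) (hfz : dualFeasible Y D z) :
    pStar Y xs β m ≤ dualObj Y xs β D w z := by
  classical
  -- each D i is a 0/1 diagonal matrix
  have hD : ∀ i : Fin ℓ, ∃ f : Fin n → ℝ,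
      (∀ j, f j = 0 ∨ f j = 1) ∧ D i = Matrix.diagonal f := by
    intro i
    have hmem : D i ∈ signPatterns Y := by rw [← hrange]; exact ⟨i, rfl⟩
    obtain ⟨u0, -, hu0⟩ := hmem
    refine ⟨_, fun j => ?_, hu0⟩
    split
    · right; rfl
    · left; rfl
  have hrel : ∀ (i : Fin ℓ) (x : Fin d → ℝ),
      (∀ j, 0 ≤ ((2 • D i - 1).mulVec (Y.mulVec x)) j) →
      (D i).mulVec (Y.mulVec x) = relu (Y.mulVec x) := by
    intro i x hx
    obtain ⟨f, hf01, hfD⟩ := hD i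
    rw [hfD]
    rw [hfD] at hx
    exact relu_of_feas hf01 hx
  have hscale : ∀ (i : Fin ℓ) (x : Fin d → ℝ),
      (∀ j, 0 ≤ ((2 • D i - 1).mulVec (Y.mulVec x)) j) → ∀ c : ℝ, 0 ≤ c →
      ∀ j, 0 ≤ ((2 • D i - 1).mulVec (Y.mulVec (c • x))) j := by
    intro i x hx c hc j
    rw [Matrix.mulVec_smul, Matrix.mulVec_smul, Pi.smul_apply, smul_eq_mul]
    exact mul_nonneg hc (hx j)
  -- one neuron realizes a (±)-scaled feasible block
  have hatom : ∀ (i : Fin ℓ) (x : Fin d → ℝ),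
      (∀ j, 0 ≤ ((2 • D i - 1).mulVec (Y.mulVec x)) j) → ∀ σv : ℝ, σv = 1 ∨ σv = -1 →
      ∃ uu vv, vv • relu (Y.mulVec uu) = σv • ((D i).mulVec (Y.mulVec x))
        ∧ l2 uu ^ 2 + |vv| ^ 2 = 2 * l2 x := by
    intro i x hx σv hσ
    rw [hrel i x hx]
    by_cases hx0 : x = 0
    · refine ⟨0, 0, ?_, ?_⟩
      · rw [hx0, Matrix.mulVec_zero, relu_zero, zero_smul, smul_zero]
      · rw [hx0, l2_zero]
        simp [l2_zero]
    · set r := Real.sqrt (l2 x) with hr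
      have hrpos : 0 < r := Real.sqrt_pos.mpr (l2_pos hx0)
      have hr2 : r ^ 2 = l2 x := Real.sq_sqrt (l2_nonneg x)
      refine ⟨r⁻¹ • x, σv * r, ?_, ?_⟩
      · rw [Matrix.mulVec_smul, relu_smul (by positivity), smul_smul]
        congr 1
        field_simp
      · have h1 : |σv| = 1 := by rcases hσ with h | h <;> simp [h]
        rw [l2_smul, abs_inv, abs_of_pos hrpos, abs_mul, h1, abs_of_pos hrpos, one_mul]
        have hrne : r ≠ 0 := hrpos.ne'
        field_simp
        nlinarith [hr2]
  -- Caratheodory on the atoms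
  set g : (Fin ℓ ⊕ Fin ℓ) → (Fin n → ℝ) × ℝ :=
    Sum.elim (fun i => ((D i).mulVec (Y.mulVec (w i)), l2 (w i)))
             (fun i => (-((D i).mulVec (Y.mulVec (z i))), l2 (z i))) with hgdef
  have hfr : Module.finrank ℝ ((Fin n → ℝ) × ℝ) = n + 1 := by
    rw [Module.finrank_prod, Module.finrank_fin_fun, Module.finrank_self]
  obtain ⟨s, c', hsub, hcard, hnn, hsum⟩ :=
    conic_caratheodory g Finset.univ (fun _ => (1 : ℝ)) (fun _ _ => zero_le_one)
  rw [hfr] at hcard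
  have hfst : ∑ k ∈ s, c' k • (g k).1 = ∑ i, (D i).mulVec (Y.mulVec (w i - z i)) := by
    have h := congrArg Prod.fst hsum
    rw [Prod.fst_sum, Prod.fst_sum] at h
    simp only [Prod.smul_fst, one_smul] at h
    rw [h, Fintype.sum_sum_type, ← Finset.sum_add_distrib]
    refine Finset.sum_congr rfl fun i _ => ?_
    simp only [hgdef, Sum.elim_inl, Sum.elim_inr]
    rw [Matrix.mulVec_sub, Matrix.mulVec_sub, sub_eq_add_neg]
  have hsnd : ∑ k ∈ s, c' k * (g k).2 = ∑ i, (l2 (w i) + l2 (z i)) := by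
    have h := congrArg Prod.snd hsum
    rw [Prod.snd_sum, Prod.snd_sum] at h
    simp only [Prod.smul_snd, smul_eq_mul, one_mul] at h
    rw [h, Fintype.sum_sum_type, ← Finset.sum_add_distrib]
    refine Finset.sum_congr rfl fun i _ => ?_
    simp [hgdef]
  -- per-index data
  set x : (Fin ℓ ⊕ Fin ℓ) → Fin d → ℝ := Sum.elim w z with hxdef
  set idx : (Fin ℓ ⊕ Fin ℓ) → Fin ℓ := Sum.elim id id with hidxdef
  set σv : (Fin ℓ ⊕ Fin ℓ) → ℝ := Sum.elim (fun _ => (1:ℝ)) (fun _ => (-1:ℝ)) with hσdef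
  have hgk1 : ∀ k, (g k).1 = σv k • ((D (idx k)).mulVec (Y.mulVec (x k))) := by
    intro k
    cases k with
    | inl i => simp [hgdef, hσdef, hidxdef, hxdef]
    | inr i => simp [hgdef, hσdef, hidxdef, hxdef]
  have hgk2 : ∀ k, (g k).2 = l2 (x k) := by
    intro k
    cases k with
    | inl i => simp [hgdef, hxdef]
    | inr i => simp [hgdef, hxdef]
  have hfeask : ∀ k j, 0 ≤ ((2 • D (idx k) - 1).mulVec (Y.mulVec (x k))) j := by
    intro k j
    cases k with
    | inl i => exact hfw i j
    | inr i => exact hfz i j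
  have hσ01 : ∀ k, σv k = 1 ∨ σv k = -1 := by
    intro k
    cases k with
    | inl i => left; simp [hσdef]
    | inr i => right; simp [hσdef]
  have hchoose : ∀ k : Fin ℓ ⊕ Fin ℓ, ∃ uu vv, k ∈ s →
      (vv • relu (Y.mulVec uu) = c' k • (g k).1
        ∧ l2 uu ^ 2 + |vv| ^ 2 = 2 * (c' k * (g k).2)) := by
    intro k
    by_cases hk : k ∈ s
    · obtain ⟨uu, vv, h1, h2⟩ := hatom (idx k) (c' k • x k)
        (hscale _ _ (hfeask k) _ (hnn k hk)) (σv k) (hσ01 k)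
      refine ⟨uu, vv, fun _ => ⟨?_, ?_⟩⟩
      · rw [h1, Matrix.mulVec_smul, Matrix.mulVec_smul, hgk1 k, smul_comm]
      · rw [h2, hgk2 k, l2_smul, abs_of_nonneg (hnn k hk)]
    · exact ⟨0, 0, fun h => absurd h hk⟩
  choose U V hUV using hchoose
  obtain ⟨u, v, hpad⟩ := exists_pad s (le_trans hcard hm) U V
    (fun a b => (b • relu (Y.mulVec a), l2 a ^ 2 + |b| ^ 2))
    (by simp [l2_zero])
  have hp1 : ∑ j, v j • relu (Y.mulVec (u j))
      = ∑ i, (D i).mulVec (Y.mulVec (w i - z i)) := by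
    have h := congrArg Prod.fst hpad
    rw [Prod.fst_sum, Prod.fst_sum] at h
    simp only at h
    rw [h, ← hfst]
    exact Finset.sum_congr rfl fun k hk => (hUV k hk).1
  have hp2 : ∑ j, (l2 (u j) ^ 2 + |v j| ^ 2) = 2 * ∑ i, (l2 (w i) + l2 (z i)) := by
    have h := congrArg Prod.snd hpad
    rw [Prod.snd_sum, Prod.snd_sum] at h
    simp only at h
    rw [h, ← hsnd, Finset.mul_sum]
    exact Finset.sum_congr rfl fun k hk => (hUV k hk).2
  have hobj : primalObj Y xs β m u v = dualObj Y xs β D w z := by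
    unfold primalObj dualObj
    rw [hp1, hp2]
    ring
  refine le_trans (csInf_le ⟨0, ?_⟩ ⟨u, v, rfl⟩) (le_of_eq hobj)
  rintro c ⟨u', v', rfl⟩
  exact primalObj_nonneg Y xs hβ m u' v'

lemma dualFeasible_zero {n d ℓ : ℕ} (Y : Matrix (Fin n) (Fin d) ℝ)
    (D : Fin ℓ → Matrix (Fin n) (Fin n) ℝ) : dualFeasible Y D 0 := by
  intro i j
  simp [Matrix.mulVec_zero]

lemma pStar_le_dStar {n d ℓ : ℕ} (Y : Matrix (Fin n) (Fin d) ℝ) (xs : Fin n → ℝ)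
    {β : ℝ} (hβ : 0 < β) (D : Fin ℓ → Matrix (Fin n) (Fin n) ℝ)
    (hrange : Set.range D = signPatterns Y) {m : ℕ} (hm : n + 1 ≤ m) :
    pStar Y xs β m ≤ dStar Y xs β D := by
  apply le_of_forall_pos_le_add
  intro ε hε
  have hne : {c | ∃ w z : Fin ℓ → Fin d → ℝ,
      dualFeasible Y D w ∧ dualFeasible Y D z ∧ c = dualObj Y xs β D w z}.Nonempty :=
    ⟨dualObj Y xs β D 0 0, 0, 0, dualFeasible_zero Y D, dualFeasible_zero Y D, rfl⟩
  obtain ⟨a, ⟨w, z, hfw, hfz, rfl⟩, hlt⟩ := Real.lt_sInf_add_pos hne hε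
  exact le_trans (pStar_le_dualObj Y xs hβ D hrange hm hfw hfz) hlt.le

end


/-- **Strong duality.** There exists `m* ≤ n` such that for every
`m ≥ m* + 1`, the primal optimal value with `m` neurons equals the convex dual
optimal value. -/
theorem strong_duality {n d ℓ : ℕ} (Y : Matrix (Fin n) (Fin d) ℝ) (xs : Fin n → ℝ)
    (β : ℝ) (hβ : 0 < β) (D : Fin ℓ → Matrix (Fin n) (Fin n) ℝ)
    (hinj : Function.Injective D) (hrange : Set.range D = signPatterns Y) :
    ∃ mstar ≤ n, ∀ m ≥ mstar + 1, pStar Y xs β m = dStar Y xs β D := by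
  refine ⟨n, le_refl n, fun m hm => le_antisymm ?_ ?_⟩
  · exact pStar_le_dStar Y xs hβ D hrange hm
  · exact dStar_le_pStar Y xs hβ D hrange m
end

section
/- Let Y ∈ ℝ^{n×d}, x* ∈ ℝ^n, y ∈ ℝ^n, β > 0, and let D_1, …, D_ℓ be the ReLU sign-pattern matrices of Y. Consider the residual primal training problem with m neurons: p*_m = inf over u_1,…,u_m ∈ ℝ^d and v_1,…,v_m ∈ ℝ of (1/2)‖y + Σ_{j=1}^m (Y u_j)_+ v_j − x*‖_2² + (β/2) Σ_{j=1}^m (‖u_j‖_2² + |v_j|²). Then there exists m* ≤ n such that for every m ≥ m* + 1, p*_m equals the optimal value of the convex dual program with labels x* − y, namely inf over (w_i, z_i)_{i=1}^ℓ with (2D_i − I)Y w_i ≥ 0 and (2D_i − I)Y z_i ≥ 0 componentwise of (1/2)‖Σ_{i=1}^ℓ D_i Y (w_i − z_i) − (x* − y)‖_2² + β Σ_{i=1}^ℓ (‖w_i‖_2 + ‖z_i‖_2). -/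
open Matrix Finset

namespace SD

lemma l2_eq_norm {k : ℕ} (x : Fin k → ℝ) :
    l2 x = ‖(WithLp.equiv 2 (Fin k → ℝ)).symm x‖ := by
  rw [EuclideanSpace.norm_eq]
  unfold l2
  congr 1
  refine Finset.sum_congr rfl fun i _ => ?_
  rw [WithLp.equiv_symm_apply, WithLp.ofLp_toLp, Real.norm_eq_abs, sq_abs]

lemma l2_nonneg {k : ℕ} (x : Fin k → ℝ) : 0 ≤ l2 x := Real.sqrt_nonneg _

lemma l2_zero {k : ℕ} : l2 (0 : Fin k → ℝ) = 0 := by simp [l2]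

lemma l2_eq_zero {k : ℕ} {x : Fin k → ℝ} (h : l2 x = 0) : x = 0 := by
  rw [l2_eq_norm, norm_eq_zero] at h
  have := congrArg (WithLp.equiv 2 (Fin k → ℝ)) h
  simpa using this

lemma l2_smul {k : ℕ} (c : ℝ) (x : Fin k → ℝ) : l2 (c • x) = |c| * l2 x := by
  rw [l2_eq_norm, l2_eq_norm, WithLp.equiv_symm_apply, WithLp.toLp_smul, ← WithLp.equiv_symm_apply, norm_smul, Real.norm_eq_abs]

lemma l2_sum_le {k : ℕ} {ι : Type*} (s : Finset ι) (f : ι → Fin k → ℝ) :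
    l2 (∑ j ∈ s, f j) ≤ ∑ j ∈ s, l2 (f j) := by
  have h : (WithLp.equiv 2 (Fin k → ℝ)).symm (∑ j ∈ s, f j)
      = ∑ j ∈ s, (WithLp.equiv 2 (Fin k → ℝ)).symm (f j) :=
    map_sum (WithLp.linearEquiv 2 ℝ (Fin k → ℝ)).symm f s
  rw [l2_eq_norm, h]
  refine (norm_sum_le _ _).trans ?_
  exact le_of_eq (Finset.sum_congr rfl fun j _ => (l2_eq_norm (f j)).symm)

lemma relu_smul {k : ℕ} {c : ℝ} (hc : 0 ≤ c) (x : Fin k → ℝ) :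
    relu (c • x) = c • relu x := by
  funext i
  simp only [relu, Pi.smul_apply, smul_eq_mul]
  rw [mul_max_of_nonneg _ _ hc, mul_zero]

lemma twoSmulSubOne_mulVec {n : ℕ} (g x : Fin n → ℝ) (k : Fin n) :
    ((2 • Matrix.diagonal g - 1).mulVec x) k = (2 * g k - 1) * x k := by
  have h : (2 • Matrix.diagonal g - 1 : Matrix (Fin n) (Fin n) ℝ)
      = Matrix.diagonal (fun k => 2 * g k - 1) := by
    ext i j
    by_cases hij : i = j <;>
      simp [Matrix.diagonal_apply, Matrix.one_apply, hij, two_mul]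
  rw [h, Matrix.mulVec_diagonal]

lemma feas_relu {n : ℕ} (g : Fin n → ℝ) (hg : ∀ k, g k = 0 ∨ g k = 1) (x : Fin n → ℝ)
    (hx : ∀ k, 0 ≤ ((2 • Matrix.diagonal g - 1).mulVec x) k) :
    (Matrix.diagonal g).mulVec x = relu x := by
  funext k
  rw [Matrix.mulVec_diagonal]
  have h := hx k
  rw [twoSmulSubOne_mulVec] at h
  rcases hg k with h0 | h0 <;> rw [h0] at h ⊢
  · simp only [relu]
    rw [zero_mul, max_eq_right (by linarith)]
  · simp only [relu]
    rw [one_mul, max_eq_left (by linarith)]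


variable {n d : ℕ} (Y : Matrix (Fin n) (Fin d) ℝ)

noncomputable def pat (a : Fin d → ℝ) : Matrix (Fin n) (Fin n) ℝ :=
  Matrix.diagonal (fun i => if 0 ≤ Y.mulVec a i then (1 : ℝ) else 0)

lemma pat_mem (a : Fin d → ℝ) : pat Y a ∈ signPatterns Y := by
  have h0 : (0:ℝ) < l2 a + 1 := by nlinarith [l2_nonneg a]
  refine ⟨(l2 a + 1)⁻¹ • a, ?_, ?_⟩
  · rw [l2_smul, abs_of_nonneg (le_of_lt (inv_pos.mpr h0))]
    rw [inv_mul_le_iff₀ h0]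
    have := l2_nonneg a
    linarith
  · unfold pat
    refine congrArg Matrix.diagonal (funext fun i => ?_)
    rw [Matrix.mulVec_smul, Pi.smul_apply, smul_eq_mul]
    exact if_congr (mul_nonneg_iff_of_pos_left (inv_pos.mpr h0)).symm rfl rfl

lemma relu_eq_pat (a : Fin d → ℝ) :
    relu (Y.mulVec a) = (pat Y a).mulVec (Y.mulVec a) := by
  funext k
  rw [pat, Matrix.mulVec_diagonal]
  show max _ 0 = _
  by_cases h : 0 ≤ Y.mulVec a k
  · rw [if_pos h, one_mul]
    exact max_eq_left h
  · rw [if_neg h, zero_mul]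
    exact max_eq_right (le_of_lt (not_le.mp h))

lemma pat_feas (a : Fin d → ℝ) (k : Fin n) :
    0 ≤ ((2 • pat Y a - 1).mulVec (Y.mulVec a)) k := by
  rw [pat, twoSmulSubOne_mulVec]
  by_cases h : 0 ≤ Y.mulVec a k
  · rw [if_pos h]
    nlinarith
  · rw [if_neg h]
    nlinarith [not_le.mp h]

lemma mulVec_sum {p q : ℕ} (A : Matrix (Fin p) (Fin q) ℝ) {ι : Type*} (S : Finset ι)
    (f : ι → Fin q → ℝ) : A.mulVec (∑ j ∈ S, f j) = ∑ j ∈ S, A.mulVec (f j) := by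
  exact map_sum A.mulVecLin f S

lemma weak_duality {n d ℓ : ℕ} (Y : Matrix (Fin n) (Fin d) ℝ) (b : Fin n → ℝ) {β : ℝ}
    (hβ : 0 < β) (D : Fin ℓ → Matrix (Fin n) (Fin n) ℝ)
    (hrange : Set.range D = signPatterns Y) (m : ℕ) (u : Fin m → Fin d → ℝ) (v : Fin m → ℝ) :
    ∃ w z : Fin ℓ → Fin d → ℝ, dualFeasible Y D w ∧ dualFeasible Y D z ∧
      dualObj Y b β D w z ≤ primalObj Y b β m u v := by
  classical
  have hpat : ∀ j : Fin m, ∃ i, D i = pat Y (u j) := by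
    intro j
    have : pat Y (u j) ∈ Set.range D := by rw [hrange]; exact pat_mem Y (u j)
    exact this
  choose idx hidx using hpat
  set w : Fin ℓ → Fin d → ℝ :=
    fun i => ∑ j ∈ univ.filter (fun j => idx j = i ∧ 0 ≤ v j), v j • u j with hw
  set z : Fin ℓ → Fin d → ℝ :=
    fun i => ∑ j ∈ univ.filter (fun j => idx j = i ∧ ¬ 0 ≤ v j), (-v j) • u j with hz
  -- generic feasibility
  have key : ∀ (i : Fin ℓ) (S : Finset (Fin m)) (c : Fin m → ℝ),
      (∀ j ∈ S, idx j = i) → (∀ j ∈ S, 0 ≤ c j) →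
      ∀ k, 0 ≤ ((2 • D i - 1).mulVec (Y.mulVec (∑ j ∈ S, c j • u j))) k := by
    intro i S c hS hc k
    rw [mulVec_sum, mulVec_sum, Finset.sum_apply]
    refine Finset.sum_nonneg fun j hj => ?_
    have h1 : Y.mulVec (c j • u j) = c j • Y.mulVec (u j) := Matrix.mulVec_smul Y (c j) (u j)
    rw [h1, Matrix.mulVec_smul, Pi.smul_apply, smul_eq_mul]
    refine mul_nonneg (hc j hj) ?_
    have h2 : D i = pat Y (u j) := by rw [← hS j hj]; exact hidx j
    rw [h2]
    exact pat_feas Y (u j) k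
  have hwfeas : dualFeasible Y D w := by
    intro i k
    exact key i _ _ (fun j hj => ((Finset.mem_filter.mp hj).2).1)
      (fun j hj => ((Finset.mem_filter.mp hj).2).2) k
  have hzfeas : dualFeasible Y D z := by
    intro i k
    refine key i _ _ (fun j hj => ((Finset.mem_filter.mp hj).2).1)
      (fun j hj => ?_) k
    have := ((Finset.mem_filter.mp hj).2).2
    push_neg at this
    linarith
  refine ⟨w, z, hwfeas, hzfeas, ?_⟩
  -- w i - z i over the fiber
  have hwz : ∀ i, w i - z i = ∑ j ∈ univ.filter (fun j => idx j = i), v j • u j := by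
    intro i
    rw [← Finset.sum_filter_add_sum_filter_not (univ.filter (fun j => idx j = i))
      (fun j => 0 ≤ v j) (fun j => v j • u j), Finset.filter_filter, Finset.filter_filter]
    have hneg : ∑ j ∈ univ.filter (fun j => idx j = i ∧ ¬ 0 ≤ v j), (-v j) • u j
        = - ∑ j ∈ univ.filter (fun j => idx j = i ∧ ¬ 0 ≤ v j), v j • u j := by
      rw [← Finset.sum_neg_distrib]
      exact Finset.sum_congr rfl fun j _ => neg_smul (v j) (u j)
    show w i - z i = _
    rw [hw, hz]
    simp only [hneg, sub_neg_eq_add]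
  -- data term
  have hdata : ∑ i, (D i).mulVec (Y.mulVec (w i - z i)) = ∑ j, v j • relu (Y.mulVec (u j)) := by
    have : ∀ i, (D i).mulVec (Y.mulVec (w i - z i))
        = ∑ j ∈ univ.filter (fun j => idx j = i), v j • relu (Y.mulVec (u j)) := by
      intro i
      rw [hwz i, mulVec_sum, mulVec_sum]
      refine Finset.sum_congr rfl fun j hj => ?_
      have h2 : D i = pat Y (u j) := by
        rw [← (Finset.mem_filter.mp hj).2]; exact hidx j
      rw [Matrix.mulVec_smul, Matrix.mulVec_smul, h2, ← relu_eq_pat]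
    rw [Finset.sum_congr rfl fun i _ => this i]
    exact Finset.sum_fiberwise_of_maps_to (fun j _ => Finset.mem_univ (idx j)) _
  -- regularization
  have hreg : ∑ i, (l2 (w i) + l2 (z i)) ≤ ∑ j, |v j| * l2 (u j) := by
    have hperi : ∀ i, l2 (w i) + l2 (z i)
        ≤ ∑ j ∈ univ.filter (fun j => idx j = i), |v j| * l2 (u j) := by
      intro i
      rw [← Finset.sum_filter_add_sum_filter_not (univ.filter (fun j => idx j = i))
        (fun j => 0 ≤ v j) (fun j => |v j| * l2 (u j)), Finset.filter_filter,
        Finset.filter_filter]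
      refine add_le_add ?_ ?_
      · refine (l2_sum_le _ _).trans (le_of_eq ?_)
        refine Finset.sum_congr rfl fun j _ => ?_
        rw [l2_smul]
      · refine (l2_sum_le _ _).trans (le_of_eq ?_)
        refine Finset.sum_congr rfl fun j _ => ?_
        rw [l2_smul, abs_neg]
    refine (Finset.sum_le_sum fun i _ => hperi i).trans (le_of_eq ?_)
    exact Finset.sum_fiberwise_of_maps_to (fun j _ => Finset.mem_univ (idx j)) _
  -- conclude
  unfold dualObj primalObj
  rw [hdata]
  refine add_le_add le_rfl ?_
  have h3 : ∑ j, |v j| * l2 (u j) ≤ ∑ j, (l2 (u j) ^ 2 + |v j| ^ 2) / 2 := by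
    refine Finset.sum_le_sum fun j _ => ?_
    nlinarith [sq_nonneg (l2 (u j) - |v j|), abs_nonneg (v j), l2_nonneg (u j)]
  calc β * ∑ i, (l2 (w i) + l2 (z i)) ≤ β * ∑ j, |v j| * l2 (u j) :=
        mul_le_mul_of_nonneg_left hreg (le_of_lt hβ)
    _ ≤ β * ∑ j, (l2 (u j) ^ 2 + |v j| ^ 2) / 2 :=
        mul_le_mul_of_nonneg_left h3 (le_of_lt hβ)
    _ = (β / 2) * ∑ j, (l2 (u j) ^ 2 + |v j| ^ 2) := by
        rw [← Finset.sum_div]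
        ring

lemma relu_zero {k : ℕ} : relu (0 : Fin k → ℝ) = 0 := by
  funext i; simp [relu]

lemma sum_dite_fin {M : Type*} [AddCommMonoid M] {c m : ℕ} (hcm : c ≤ m) (G : Fin c → M) :
    ∑ j : Fin m, (if h : (j : ℕ) < c then G ⟨j, h⟩ else 0) = ∑ a : Fin c, G a := by
  set f : ℕ → M := fun j => if h : j < c then G ⟨j, h⟩ else 0 with hf
  calc ∑ j : Fin m, (if h : (j : ℕ) < c then G ⟨j, h⟩ else 0)
      = ∑ j ∈ Finset.range m, f j := Fin.sum_univ_eq_sum_range f m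
    _ = ∑ j ∈ Finset.range c, f j :=
        (Finset.sum_subset (Finset.range_subset_range.mpr hcm)
          (fun x _ hx => dif_neg (by simpa using hx))).symm
    _ = ∑ a : Fin c, f a := (Fin.sum_univ_eq_sum_range f c).symm
    _ = ∑ a : Fin c, G a := Finset.sum_congr rfl fun a _ => by
        show (if h : (a : ℕ) < c then G ⟨a, h⟩ else 0) = G a
        exact dif_pos a.isLt

lemma primal_le {n d ℓ : ℕ} (Y : Matrix (Fin n) (Fin d) ℝ) (b : Fin n → ℝ) {β : ℝ}
    (hβ : 0 < β) (D : Fin ℓ → Matrix (Fin n) (Fin n) ℝ)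
    (hrange : Set.range D = signPatterns Y) {m : ℕ} (hm : n + 1 ≤ m)
    (w z : Fin ℓ → Fin d → ℝ) (hw : dualFeasible Y D w) (hz : dualFeasible Y D z) :
    ∃ u : Fin m → Fin d → ℝ, ∃ v : Fin m → ℝ,
      primalObj Y b β m u v ≤ dualObj Y b β D w z := by
  classical
  have hDdiag : ∀ i, ∃ g : Fin n → ℝ, D i = Matrix.diagonal g ∧ ∀ k, g k = 0 ∨ g k = 1 := by
    intro i
    have hDi : D i ∈ signPatterns Y := hrange ▸ Set.mem_range_self i
    obtain ⟨a, -, h⟩ := hDi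
    refine ⟨_, h, fun k => ?_⟩
    by_cases h0 : 0 ≤ Y.mulVec a k
    · right; simp [h0]
    · left; simp [h0]
  have hDrelu : ∀ (i : Fin ℓ) (x : Fin ℓ → Fin d → ℝ), dualFeasible Y D x →
      (D i).mulVec (Y.mulVec (x i)) = relu (Y.mulVec (x i)) := by
    intro i x hx
    obtain ⟨g, hg, hg01⟩ := hDdiag i
    rw [hg]
    exact feas_relu g hg01 _ (fun k => by have := hx i k; rwa [hg] at this)
  set s : Fin n → ℝ := ∑ i, (D i).mulVec (Y.mulVec (w i - z i)) with hs
  set W : ℝ := ∑ i, (l2 (w i) + l2 (z i)) with hW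
  have hW0 : 0 ≤ W := Finset.sum_nonneg fun i _ =>
    add_nonneg (l2_nonneg _) (l2_nonneg _)
  rcases eq_or_lt_of_le hW0 with hWeq | hWpos
  · -- degenerate case : all zero
    have hall : ∀ i, w i = 0 ∧ z i = 0 := by
      intro i
      have h1 := (Finset.sum_eq_zero_iff_of_nonneg
        (fun i (_ : i ∈ univ) => add_nonneg (l2_nonneg (w i)) (l2_nonneg (z i)))).mp
        hWeq.symm i (Finset.mem_univ i)
      have hw0 := l2_nonneg (w i)
      have hz0 := l2_nonneg (z i)
      exact ⟨l2_eq_zero (by linarith), l2_eq_zero (by linarith)⟩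
    have hs0 : s = 0 := by
      rw [hs]
      refine Finset.sum_eq_zero fun i _ => ?_
      rw [(hall i).1, (hall i).2, sub_zero, Matrix.mulVec_zero, Matrix.mulVec_zero]
    refine ⟨0, 0, le_of_eq ?_⟩
    unfold primalObj dualObj
    rw [← hs, hs0, ← hW, ← hWeq]
    simp [l2_zero]
  · -- main case
    set A : Set (Fin n → ℝ) := {g | ∃ u0 : Fin d → ℝ, ∃ v0 : ℝ,
      l2 u0 ≤ 1 ∧ |v0| ≤ 1 ∧ g = v0 • relu (Y.mulVec u0)} with hA
    have hatom : ∀ a : Fin d → ℝ, (l2 a)⁻¹ • relu (Y.mulVec a) ∈ A ∧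
        -((l2 a)⁻¹ • relu (Y.mulVec a)) ∈ A := by
      intro a
      have hinv : 0 ≤ (l2 a)⁻¹ := inv_nonneg.mpr (l2_nonneg a)
      have h1 : l2 ((l2 a)⁻¹ • a) ≤ 1 := by
        rw [l2_smul, abs_of_nonneg hinv]
        rcases eq_or_lt_of_le (l2_nonneg a) with h | h
        · rw [← h]
          simp
        · rw [inv_mul_cancel₀ (ne_of_gt h)]
      have h2 : relu (Y.mulVec ((l2 a)⁻¹ • a)) = (l2 a)⁻¹ • relu (Y.mulVec a) := by
        rw [Matrix.mulVec_smul, relu_smul hinv]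
      exact ⟨⟨_, 1, h1, by norm_num, by rw [one_smul, h2]⟩,
        ⟨_, -1, h1, by norm_num, by rw [neg_one_smul, h2]⟩⟩
    set p : Fin ℓ × Bool → (Fin n → ℝ) := fun x =>
      if x.2 then (l2 (w x.1))⁻¹ • relu (Y.mulVec (w x.1))
      else -((l2 (z x.1))⁻¹ • relu (Y.mulVec (z x.1))) with hp
    set r : Fin ℓ × Bool → ℝ := fun x => if x.2 then l2 (w x.1) else l2 (z x.1) with hr
    have hr0 : ∀ x, 0 ≤ r x := by
      intro x
      rw [hr]
      by_cases h : x.2 <;> simp [h, l2_nonneg]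
    have hpA : ∀ x, p x ∈ A := by
      intro x
      rw [hp]
      by_cases h : x.2 <;> simp only [h, if_true, if_false]
      · exact (hatom (w x.1)).1
      · exact (hatom (z x.1)).2
    have hcancel : ∀ a : Fin d → ℝ, l2 a • ((l2 a)⁻¹ • relu (Y.mulVec a))
        = relu (Y.mulVec a) := by
      intro a
      rcases eq_or_ne (l2 a) 0 with h | h
      · rw [h, zero_smul, l2_eq_zero h, Matrix.mulVec_zero, relu_zero]
      · rw [smul_smul, mul_inv_cancel₀ h, one_smul]
    have hsum : ∑ x : Fin ℓ × Bool, r x • p x = s := by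
      rw [Fintype.sum_prod_type]
      rw [hs]
      refine Finset.sum_congr rfl fun i _ => ?_
      rw [Fintype.sum_bool]
      show r (i, true) • p (i, true) + r (i, false) • p (i, false) = _
      have hpt : p (i, true) = (l2 (w i))⁻¹ • relu (Y.mulVec (w i)) := by simp [hp]
      have hpf : p (i, false) = -((l2 (z i))⁻¹ • relu (Y.mulVec (z i))) := by simp [hp]
      have hrt : r (i, true) = l2 (w i) := by simp [hr]
      have hrf : r (i, false) = l2 (z i) := by simp [hr]
      rw [hpt, hpf, hrt, hrf, hcancel (w i), smul_neg, hcancel (z i)]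
      rw [Matrix.mulVec_sub, Matrix.mulVec_sub, hDrelu i w hw, hDrelu i z hz]
      abel
    have hrsum : ∑ x : Fin ℓ × Bool, r x = W := by
      rw [Fintype.sum_prod_type, hW]
      refine Finset.sum_congr rfl fun i _ => ?_
      rw [Fintype.sum_bool]
      show r (i, true) + r (i, false) = _
      simp [hr]
    have hq : W⁻¹ • s ∈ convexHull ℝ A := by
      have hmem := Finset.centerMass_mem_convexHull (univ : Finset (Fin ℓ × Bool))
        (fun x _ => hr0 x) (by rw [hrsum]; exact hWpos) (fun x _ => hpA x)
      rwa [Finset.centerMass, hrsum, hsum] at hmem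
    rw [convexHull_eq_union] at hq
    simp only [Set.mem_iUnion] at hq
    obtain ⟨t, htA, htAI, hqt⟩ := hq
    have hcard : #t ≤ n + 1 := by
      calc #t = Fintype.card ↥t := (Fintype.card_coe t).symm
        _ ≤ Module.finrank ℝ (vectorSpan ℝ
              (Set.range ((↑) : ↥t → (Fin n → ℝ)))) + 1 := htAI.card_le_finrank_succ
        _ ≤ Module.finrank ℝ (Fin n → ℝ) + 1 :=
            Nat.add_le_add_right (Submodule.finrank_le _) 1
        _ = n + 1 := by rw [Module.finrank_fin_fun]
    rw [Finset.convexHull_eq] at hqt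
    obtain ⟨μ, hμ0, hμ1, hμq⟩ := hqt
    have hcm : ∑ g ∈ t, μ g • g = W⁻¹ • s := by
      rw [← hμq, Finset.centerMass, hμ1, inv_one, one_smul]
      rfl
    have hAt : ∀ x : ↥t, ∃ u0 : Fin d → ℝ, ∃ v0 : ℝ, l2 u0 ≤ 1 ∧ |v0| ≤ 1 ∧
        (x : Fin n → ℝ) = v0 • relu (Y.mulVec u0) := fun x => htA x.2
    choose U0 V0 hU0 hV0 hgeq using hAt
    set c : ℕ := #t with hc
    have hcmle : c ≤ m := le_trans hcard hm
    set e : ↥t ≃ Fin c := t.equivFin with he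
    set cc : ↥t → ℝ := fun x => Real.sqrt (W * μ x) with hcc
    have hcc0 : ∀ x : ↥t, 0 ≤ cc x := fun x => Real.sqrt_nonneg _
    have hccsq : ∀ x : ↥t, cc x * cc x = W * μ x := fun x =>
      Real.mul_self_sqrt (mul_nonneg hW0 (hμ0 x x.2))
    set u : Fin m → Fin d → ℝ := fun j =>
      if h : (j : ℕ) < c then cc (e.symm ⟨j, h⟩) • U0 (e.symm ⟨j, h⟩) else 0 with hu
    set v : Fin m → ℝ := fun j =>
      if h : (j : ℕ) < c then cc (e.symm ⟨j, h⟩) * V0 (e.symm ⟨j, h⟩) else 0 with hv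
    have hxterm : ∀ x : ↥t, (cc x * V0 x) • relu (Y.mulVec (cc x • U0 x))
        = (W * μ x) • (x : Fin n → ℝ) := by
      intro x
      calc (cc x * V0 x) • relu (Y.mulVec (cc x • U0 x))
          = (cc x * V0 x) • (cc x • relu (Y.mulVec (U0 x))) := by
            rw [Matrix.mulVec_smul, relu_smul (hcc0 x)]
        _ = (W * μ x) • (V0 x • relu (Y.mulVec (U0 x))) := by
            rw [smul_smul, smul_smul, ← hccsq x]
            congr 1
            ring
        _ = (W * μ x) • (x : Fin n → ℝ) := by rw [← hgeq x]
    have houtput : ∑ j, v j • relu (Y.mulVec (u j)) = s := by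
      calc ∑ j : Fin m, v j • relu (Y.mulVec (u j))
          = ∑ j : Fin m, (if h : (j : ℕ) < c then
              (W * μ (e.symm ⟨j, h⟩)) • ((e.symm ⟨j, h⟩ : ↥t) : Fin n → ℝ) else 0) := by
            refine Finset.sum_congr rfl fun j _ => ?_
            by_cases h : (j : ℕ) < c
            · simp only [hu, hv, dif_pos h]
              exact hxterm _
            · simp only [hu, hv, dif_neg h, zero_smul]
        _ = ∑ a : Fin c, (W * μ (e.symm a)) • ((e.symm a : ↥t) : Fin n → ℝ) :=
            sum_dite_fin hcmle
              (fun a => (W * μ (e.symm a)) • ((e.symm a : ↥t) : Fin n → ℝ))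
        _ = ∑ x : ↥t, (W * μ x) • (x : Fin n → ℝ) :=
            Equiv.sum_comp e.symm (fun x => (W * μ x) • (x : Fin n → ℝ))
        _ = ∑ g ∈ t, (W * μ g) • g := Finset.sum_coe_sort t (fun g => (W * μ g) • g)
        _ = W • ∑ g ∈ t, μ g • g := by
            rw [Finset.smul_sum]
            exact Finset.sum_congr rfl fun g _ => by rw [smul_smul]
        _ = s := by
            rw [hcm, smul_smul, mul_inv_cancel₀ (ne_of_gt hWpos), one_smul]
    have hregs : ∑ j, (l2 (u j) ^ 2 + |v j| ^ 2) ≤ 2 * W := by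
      have h1 : ∑ j : Fin m, (l2 (u j) ^ 2 + |v j| ^ 2)
          ≤ ∑ j : Fin m, (if h : (j : ℕ) < c then 2 * (W * μ (e.symm ⟨j, h⟩)) else 0) := by
        refine Finset.sum_le_sum fun j _ => ?_
        by_cases h : (j : ℕ) < c
        · simp only [hu, hv, dif_pos h]
          set x := e.symm ⟨(j : ℕ), h⟩
          have h2 : l2 (cc x • U0 x) = cc x * l2 (U0 x) := by
            rw [l2_smul, abs_of_nonneg (hcc0 x)]
          rw [h2, abs_mul, abs_of_nonneg (hcc0 x)]
          have h4 := hU0 x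
          have h5 := hV0 x
          have h6 := l2_nonneg (U0 x)
          have h7 := abs_nonneg (V0 x)
          have h8 := hccsq x
          have hcsq : 0 ≤ cc x * cc x := mul_nonneg (hcc0 x) (hcc0 x)
          calc (cc x * l2 (U0 x)) ^ 2 + (cc x * |V0 x|) ^ 2
              = (cc x * cc x) * (l2 (U0 x) ^ 2 + |V0 x| ^ 2) := by ring
            _ ≤ (cc x * cc x) * 2 := by
                nlinarith [mul_le_mul h4 h4 h6 zero_le_one, mul_le_mul h5 h5 h7 zero_le_one]
            _ = 2 * (W * μ ↑x) := by rw [h8]; ring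
        · simp only [hu, hv, dif_neg h]
          simp [l2_zero]
      refine h1.trans (le_of_eq ?_)
      calc ∑ j : Fin m, (if h : (j : ℕ) < c then 2 * (W * μ (e.symm ⟨j, h⟩)) else 0)
          = ∑ a : Fin c, 2 * (W * μ (e.symm a)) :=
            sum_dite_fin hcmle (fun a => 2 * (W * μ (e.symm a)))
        _ = ∑ x : ↥t, 2 * (W * μ x) := Equiv.sum_comp e.symm (fun x => 2 * (W * μ x))
        _ = ∑ g ∈ t, 2 * (W * μ g) := Finset.sum_coe_sort t (fun g => 2 * (W * μ g))
        _ = 2 * W := by rw [← Finset.mul_sum, ← Finset.mul_sum, hμ1, mul_one]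
    refine ⟨u, v, ?_⟩
    unfold primalObj dualObj
    rw [houtput, ← hs, ← hW]
    refine add_le_add le_rfl ?_
    calc (β / 2) * ∑ j, (l2 (u j) ^ 2 + |v j| ^ 2) ≤ (β / 2) * (2 * W) :=
        mul_le_mul_of_nonneg_left hregs (by positivity)
      _ = β * W := by ring

end SD

/-- Residual (skip-connection) primal training objective with `m` neurons:
the input `y` is added to the two-layer network output. -/
noncomputable def primalObjRes {n d : ℕ} (Y : Matrix (Fin n) (Fin d) ℝ)
    (xs y : Fin n → ℝ) (β : ℝ) (m : ℕ) (u : Fin m → Fin d → ℝ) (v : Fin m → ℝ) : ℝ :=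
  (1 / 2) * l2 (y + (∑ j, v j • relu (Y.mulVec (u j))) - xs) ^ 2
    + (β / 2) * ∑ j, (l2 (u j) ^ 2 + |v j| ^ 2)

/-- **Strong duality for residual networks.** The residual primal
problem has a strong dual given by the convex dual program with labels `x* − y`. -/
theorem strong_duality_residual {n d ℓ : ℕ} (Y : Matrix (Fin n) (Fin d) ℝ)
    (xs y : Fin n → ℝ) (β : ℝ) (hβ : 0 < β)
    (D : Fin ℓ → Matrix (Fin n) (Fin n) ℝ)
    (hinj : Function.Injective D) (hrange : Set.range D = signPatterns Y) :
    ∃ mstar ≤ n, ∀ m ≥ mstar + 1,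
      sInf { c | ∃ u : Fin m → Fin d → ℝ, ∃ v : Fin m → ℝ,
          c = primalObjRes Y xs y β m u v }
        = dStar Y (xs - y) β D := by
  classical
  refine ⟨n, le_refl n, fun m hm => ?_⟩
  have hobj : ∀ (u : Fin m → Fin d → ℝ) (v : Fin m → ℝ),
      primalObjRes Y xs y β m u v = primalObj Y (xs - y) β m u v := by
    intro u v
    unfold primalObjRes primalObj
    have harg : y + (∑ j, v j • relu (Y.mulVec (u j))) - xs
        = (∑ j, v j • relu (Y.mulVec (u j))) - (xs - y) := by abel
    rw [harg]
  have hset : { c | ∃ u : Fin m → Fin d → ℝ, ∃ v : Fin m → ℝ,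
        c = primalObjRes Y xs y β m u v }
      = { c | ∃ u : Fin m → Fin d → ℝ, ∃ v : Fin m → ℝ,
        c = primalObj Y (xs - y) β m u v } := by
    simp only [hobj]
  rw [hset]
  have hPne : Set.Nonempty { c | ∃ u : Fin m → Fin d → ℝ, ∃ v : Fin m → ℝ,
      c = primalObj Y (xs - y) β m u v } := ⟨primalObj Y (xs - y) β m 0 0, 0, 0, rfl⟩
  have hPobj0 : ∀ (u : Fin m → Fin d → ℝ) (v : Fin m → ℝ), 0 ≤ primalObj Y (xs - y) β m u v := by
    intro u v
    unfold primalObj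
    have h2 : 0 ≤ ∑ j, (l2 (u j) ^ 2 + |v j| ^ 2) :=
      Finset.sum_nonneg fun j _ => add_nonneg (sq_nonneg _) (sq_nonneg _)
    have h3 : (0:ℝ) ≤ β / 2 := by positivity
    have h4 : (0:ℝ) ≤ (1/2) * l2 ((∑ j, v j • relu (Y.mulVec (u j))) - (xs - y)) ^ 2 := by
      positivity
    nlinarith [mul_nonneg h3 h2]
  have hPbdd : BddBelow { c | ∃ u : Fin m → Fin d → ℝ, ∃ v : Fin m → ℝ,
      c = primalObj Y (xs - y) β m u v } := by
    refine ⟨0, fun c hc => ?_⟩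
    obtain ⟨u, v, rfl⟩ := hc
    exact hPobj0 u v
  have hfeas0 : dualFeasible Y D (0 : Fin ℓ → Fin d → ℝ) := by
    intro i k
    show (0:ℝ) ≤ ((2 • D i - 1).mulVec (Y.mulVec ((0 : Fin ℓ → Fin d → ℝ) i))) k
    rw [Pi.zero_apply, Matrix.mulVec_zero, Matrix.mulVec_zero]
    exact le_refl 0
  have hDne : Set.Nonempty { c | ∃ w z : Fin ℓ → Fin d → ℝ,
      dualFeasible Y D w ∧ dualFeasible Y D z ∧ c = dualObj Y (xs - y) β D w z } :=
    ⟨dualObj Y (xs - y) β D 0 0, 0, 0, hfeas0, hfeas0, rfl⟩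
  have hDobj0 : ∀ w z : Fin ℓ → Fin d → ℝ, 0 ≤ dualObj Y (xs - y) β D w z := by
    intro w z
    unfold dualObj
    have h2 : 0 ≤ ∑ i, (l2 (w i) + l2 (z i)) :=
      Finset.sum_nonneg fun i _ => add_nonneg (SD.l2_nonneg _) (SD.l2_nonneg _)
    have h4 : (0:ℝ) ≤ (1/2) * l2 ((∑ i, (D i).mulVec (Y.mulVec (w i - z i))) - (xs - y)) ^ 2 := by
      positivity
    nlinarith [mul_nonneg (le_of_lt hβ) h2]
  have hDbdd : BddBelow { c | ∃ w z : Fin ℓ → Fin d → ℝ,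
      dualFeasible Y D w ∧ dualFeasible Y D z ∧ c = dualObj Y (xs - y) β D w z } := by
    refine ⟨0, fun c hc => ?_⟩
    obtain ⟨w, z, -, -, rfl⟩ := hc
    exact hDobj0 w z
  show sInf _ = dStar Y (xs - y) β D
  unfold dStar
  apply le_antisymm
  · refine le_csInf hDne ?_
    rintro c ⟨w, z, hw, hz, rfl⟩
    obtain ⟨u, v, hle⟩ := SD.primal_le Y (xs - y) hβ D hrange hm w z hw hz
    exact le_trans (csInf_le hPbdd ⟨u, v, rfl⟩) hle
  · refine le_csInf hPne ?_
    rintro c ⟨u, v, rfl⟩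
    obtain ⟨w, z, hw, hz, hle⟩ := SD.weak_duality Y (xs - y) hβ D hrange m u v
    exact le_trans (csInf_le hDbdd ⟨w, z, hw, hz, rfl⟩) hle
end

section
/- Let Y ∈ ℝ^{n×d} with n ≥ 2 and r = rank(Y) ≥ 1. Then the number ℓ of distinct ReLU sign-pattern matrices of Y satisfies ℓ ≤ 2r(e(n−1)/r)^r, where e is Euler's number. -/
open Matrix Finset

lemma claimB (n r : ℕ) (hn : 2 ≤ n) (hr : 1 ≤ r) (hrn : r ≤ n) :
    ((n : ℝ) / ((n : ℝ) - 1)) ^ r ≤ 2 * r := by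
  have hN : (2 : ℝ) ≤ (n : ℝ) := by exact_mod_cast hn
  have hM : (0 : ℝ) < (n : ℝ) - 1 := by linarith
  rcases Nat.lt_or_ge r 4 with h4 | h4
  · interval_cases r
    · rw [pow_one]
      rw [div_le_iff₀ hM]; push_cast; linarith
    · have h1 : (n:ℝ)/((n:ℝ)-1) ≤ 2 := by rw [div_le_iff₀ hM]; linarith
      have h0 : (0:ℝ) ≤ (n:ℝ)/((n:ℝ)-1) := by positivity
      calc ((n:ℝ)/((n:ℝ)-1))^2 ≤ (2:ℝ)^2 := pow_le_pow_left₀ h0 h1 2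
        _ ≤ 2 * ((2:ℕ):ℝ) := by norm_num
    · have hN3 : (3 : ℝ) ≤ (n : ℝ) := by exact_mod_cast hrn
      have h1 : (n:ℝ)/((n:ℝ)-1) ≤ 3/2 := by rw [div_le_iff₀ hM]; linarith
      have h0 : (0:ℝ) ≤ (n:ℝ)/((n:ℝ)-1) := by positivity
      calc ((n:ℝ)/((n:ℝ)-1))^3 ≤ ((3:ℝ)/2)^3 := pow_le_pow_left₀ h0 h1 3
        _ ≤ 2 * ((3:ℕ):ℝ) := by norm_num
  · -- r ≥ 4
    have hNr : (r : ℝ) ≤ (n : ℝ) := by exact_mod_cast hrn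
    have h1 : (n:ℝ)/((n:ℝ)-1) = 1 + 1/((n:ℝ)-1) := by field_simp; ring
    have h2 : (n:ℝ)/((n:ℝ)-1) ≤ Real.exp (1/((n:ℝ)-1)) := by
      rw [h1, add_comm]; exact Real.add_one_le_exp _
    have h0 : (0:ℝ) ≤ (n:ℝ)/((n:ℝ)-1) := by positivity
    have h3 : ((n:ℝ)/((n:ℝ)-1))^r ≤ Real.exp ((r : ℝ) * (1/((n:ℝ)-1))) := by
      rw [Real.exp_nat_mul]
      exact pow_le_pow_left₀ h0 h2 r
    have h5 : (r : ℝ) * (1/((n:ℝ)-1)) ≤ 2 := by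
      rw [mul_one_div, div_le_iff₀ hM]; linarith
    have h6 : Real.exp ((r : ℝ) * (1/((n:ℝ)-1))) ≤ Real.exp 2 := Real.exp_le_exp.mpr h5
    have h7 : Real.exp 2 ≤ 8 := by
      have := Real.exp_one_lt_d9
      calc Real.exp 2 = Real.exp 1 ^ 2 := by
            rw [← Real.exp_nat_mul]; norm_num
        _ ≤ 2.7182818286 ^ 2 := by
            exact pow_le_pow_left₀ (Real.exp_pos 1).le this.le 2
        _ ≤ 8 := by norm_num
    have h8 : (8 : ℝ) ≤ 2 * r := by
      have : (4:ℝ) ≤ (r:ℝ) := by exact_mod_cast h4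
      linarith
    linarith

lemma countB (n r : ℕ) (hn : 2 ≤ n) (hr : 1 ≤ r) (hrn : r ≤ n) :
    ((∑ k ∈ Iic r, n.choose k : ℕ) : ℝ) ≤
      2 * r * (Real.exp 1 * ((n : ℝ) - 1) / r) ^ r := by
  have hN : (2 : ℝ) ≤ (n : ℝ) := by exact_mod_cast hn
  have hR : (0 : ℝ) < (r : ℝ) := by exact_mod_cast hr
  have hM : (0 : ℝ) < (n : ℝ) - 1 := by linarith
  have hNpos : (0 : ℝ) < (n : ℝ) := by linarith
  set x : ℝ := (r : ℝ) / (n : ℝ) with hx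
  have hx0 : 0 < x := by positivity
  have hx1 : x ≤ 1 := by
    rw [hx, div_le_one hNpos]; exact_mod_cast hrn
  -- step 1
  have step1 : ((∑ k ∈ Iic r, n.choose k : ℕ) : ℝ) * x ^ r ≤ (1 + x) ^ n := by
    push_cast
    rw [Finset.sum_mul]
    calc ∑ k ∈ Iic r, (n.choose k : ℝ) * x ^ r
        ≤ ∑ k ∈ Iic r, (n.choose k : ℝ) * x ^ k := by
          refine Finset.sum_le_sum fun k hk => ?_
          have hkr : k ≤ r := mem_Iic.mp hk
          exact mul_le_mul_of_nonneg_left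
            (pow_le_pow_of_le_one hx0.le hx1 hkr) (by positivity)
      _ ≤ ∑ k ∈ Finset.range (n+1), (n.choose k : ℝ) * x ^ k := by
          refine Finset.sum_le_sum_of_subset_of_nonneg ?_ (fun k _ _ => by positivity)
          intro k hk
          rw [Finset.mem_range]
          exact lt_of_le_of_lt (mem_Iic.mp hk) (Nat.lt_succ_of_le hrn)
      _ = (x + 1) ^ n := by
          rw [add_pow]
          exact Finset.sum_congr rfl fun k _ => by ring
      _ = (1 + x) ^ n := by ring
  -- step 2
  have step2 : (1 + x) ^ n ≤ Real.exp 1 ^ r := by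
    calc (1 + x) ^ n ≤ Real.exp x ^ n := by
          refine pow_le_pow_left₀ (by linarith) ?_ n
          rw [add_comm]; exact Real.add_one_le_exp x
      _ = Real.exp (x * n) := by
          rw [← Real.exp_nat_mul]; ring_nf
      _ = Real.exp (r : ℝ) := by
          congr 1
          rw [hx]; field_simp
      _ = Real.exp 1 ^ r := by
          rw [← Real.exp_nat_mul]; ring_nf
  have hS : ((∑ k ∈ Iic r, n.choose k : ℕ) : ℝ) ≤ (Real.exp 1 * (n : ℝ) / r) ^ r := by
    have hxr : (0:ℝ) < x ^ r := by positivity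
    calc ((∑ k ∈ Iic r, n.choose k : ℕ) : ℝ)
        ≤ Real.exp 1 ^ r / x ^ r := (le_div_iff₀ hxr).mpr (step1.trans step2)
      _ = (Real.exp 1 / x) ^ r := (div_pow _ _ _).symm
      _ = (Real.exp 1 * (n : ℝ) / r) ^ r := by
          congr 1
          rw [hx]
          field_simp
  refine hS.trans ?_
  have key : ((n:ℝ))^r ≤ 2 * r * ((n:ℝ) - 1)^r := by
    have hclaim := claimB n r hn hr hrn
    have hMpow : (0:ℝ) < ((n:ℝ)-1)^r := by positivity
    have : ((n:ℝ)/((n:ℝ)-1))^r * ((n:ℝ)-1)^r ≤ 2*r * ((n:ℝ)-1)^r :=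
      mul_le_mul_of_nonneg_right hclaim hMpow.le
    calc ((n:ℝ))^r = ((n:ℝ)/((n:ℝ)-1))^r * ((n:ℝ)-1)^r := by
          rw [← mul_pow]; congr 1; field_simp
      _ ≤ 2*r * ((n:ℝ)-1)^r := this
  have e1 : (Real.exp 1 * (n:ℝ) / r) ^ r = (Real.exp 1 / r)^r * ((n:ℝ))^r := by
    rw [← mul_pow]; congr 1; ring
  have e2 : (Real.exp 1 * ((n:ℝ)-1) / r) ^ r = (Real.exp 1 / r)^r * ((n:ℝ)-1)^r := by
    rw [← mul_pow]; congr 1; ring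
  rw [e1, e2]
  have hc : (0:ℝ) ≤ (Real.exp 1 / r)^r := by positivity
  calc (Real.exp 1 / r)^r * ((n:ℝ))^r
      ≤ (Real.exp 1 / r)^r * (2*r*((n:ℝ)-1)^r) := mul_le_mul_of_nonneg_left key hc
    _ = 2 * r * ((Real.exp 1 / r)^r * ((n:ℝ)-1)^r) := by ring

lemma countA {n d : ℕ} (Y : Matrix (Fin n) (Fin d) ℝ) :
    (signPatterns Y).ncard ≤ ∑ k ∈ Iic Y.rank, n.choose k := by
  classical
  set pat : (Fin d → ℝ) → Finset (Fin n) :=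
    fun u => univ.filter (fun i => 0 ≤ Y.mulVec u i) with hpat
  set 𝒜 : Finset (Finset (Fin n)) := univ.filter (fun S => ∃ u, S = pat u) with h𝒜
  set φ : Finset (Fin n) → Matrix (Fin n) (Fin n) ℝ :=
    fun S => Matrix.diagonal (fun i => if i ∈ S then (1:ℝ) else 0) with hφ
  have hsub : signPatterns Y ⊆ ↑(𝒜.image φ) := by
    rintro M ⟨u, -, rfl⟩
    simp only [coe_image, Set.mem_image, mem_coe]
    refine ⟨pat u, by simp [h𝒜], ?_⟩
    simp only [hφ, hpat, mem_filter, mem_univ, true_and]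
  have h1 : (signPatterns Y).ncard ≤ 𝒜.card := by
    calc (signPatterns Y).ncard ≤ (↑(𝒜.image φ) : Set _).ncard :=
          Set.ncard_le_ncard hsub (Finset.finite_toSet _)
      _ = (𝒜.image φ).card := Set.ncard_coe_finset _
      _ ≤ 𝒜.card := card_image_le
  have hvc : 𝒜.vcDim ≤ Y.rank := by
    refine Finset.sup_le ?_
    intro s hs
    rw [mem_shatterer] at hs
    by_contra hlt
    push_neg at hlt
    have hdep : ¬ LinearIndependent ℝ (fun i : ↥(s : Finset (Fin n)) => Y ↑i) := by
      intro hli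
      have h1 := linearIndependent_iff_card_eq_finrank_span.mp hli
      have h2 : (Set.range fun i : ↥(s : Finset (Fin n)) => Y ↑i).finrank ℝ
          ≤ (Set.range Y).finrank ℝ := by
        apply Set.finrank_mono
        rintro _ ⟨i, rfl⟩; exact ⟨↑i, rfl⟩
      have h3 : (Set.range Y).finrank ℝ = Y.rank := by
        rw [Y.rank_eq_finrank_span_row]; rfl
      have h4 : s.card ≤ Y.rank := by
        rw [← Fintype.card_coe s]; omega
      omega
    obtain ⟨g, hgsum, i0, hg0⟩ := Fintype.not_linearIndependent_iff.mp hdep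
    set c : Fin n → ℝ := fun i => if h : i ∈ s then g ⟨i, h⟩ else 0 with hc
    have hcsum : ∀ j, ∑ i ∈ s, c i * Y i j = 0 := by
      intro j
      have := congrFun hgsum j
      simp only [Finset.sum_apply, Pi.smul_apply, smul_eq_mul, Pi.zero_apply] at this
      rw [← this, ← Finset.sum_attach s (fun i => c i * Y i j)]
      refine Finset.sum_congr rfl fun i _ => ?_
      simp [hc, i.2]
    have hdot : ∀ u : Fin d → ℝ, ∑ i ∈ s, c i * Y.mulVec u i = 0 := by
      intro u
      have : ∑ i ∈ s, c i * Y.mulVec u i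
          = ∑ j, (∑ i ∈ s, c i * Y i j) * u j := by
        simp only [Matrix.mulVec, dotProduct, Finset.mul_sum, Finset.sum_mul]
        rw [Finset.sum_comm]
        exact Finset.sum_congr rfl fun j _ => Finset.sum_congr rfl fun i _ => by ring
      rw [this]
      simp [hcsum]
    -- no positive coefficients
    have hnopos : ∀ i ∈ s, ¬ (0 < c i) := by
      intro i hi hipos
      obtain ⟨A, hA, hAeq⟩ := hs (filter_subset (fun j => c j ≤ 0) s)
      obtain ⟨u, rfl⟩ := (mem_filter.mp hA).2
      have hterm : ∀ j ∈ s, c j * Y.mulVec u j ≤ 0 := by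
        intro j hj
        rcases le_or_gt (c j) 0 with h | h
        · have hj2 : j ∈ s ∩ pat u := by
            rw [hAeq, mem_filter]; exact ⟨hj, h⟩
          have : 0 ≤ Y.mulVec u j := by
            have := (mem_inter.mp hj2).2
            simpa [hpat] using this
          exact mul_nonpos_of_nonpos_of_nonneg h this
        · have hni : j ∉ s ∩ pat u := by
            rw [hAeq, mem_filter]; push_neg; intro _; linarith
          have : ¬ (0 ≤ Y.mulVec u j) := by
            intro h2
            exact hni (mem_inter.mpr ⟨hj, by simpa [hpat] using h2⟩)
          exact le_of_lt (mul_neg_of_pos_of_neg h (not_le.mp this))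
      have hstrict : c i * Y.mulVec u i < 0 := by
        have hni : i ∉ s ∩ pat u := by
          rw [hAeq, mem_filter]; push_neg; intro _; linarith
        have : ¬ (0 ≤ Y.mulVec u i) := by
          intro h
          exact hni (mem_inter.mpr ⟨hi, by simpa [hpat] using h⟩)
        exact mul_neg_of_pos_of_neg hipos (not_le.mp this)
      have : ∑ j ∈ s, c j * Y.mulVec u j < 0 := by
        refine Finset.sum_neg' hterm ⟨i, hi, hstrict⟩
      rw [hdot u] at this; exact lt_irrefl _ this
    have hnoneg : ∀ i ∈ s, ¬ (c i < 0) := by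
      intro i hi hineg
      obtain ⟨A, hA, hAeq⟩ := hs (filter_subset (fun j => 0 ≤ c j) s)
      obtain ⟨u, rfl⟩ := (mem_filter.mp hA).2
      have hterm : ∀ j ∈ s, 0 ≤ c j * Y.mulVec u j := by
        intro j hj
        rcases le_or_gt 0 (c j) with h | h
        · have hj2 : j ∈ s ∩ pat u := by
            rw [hAeq, mem_filter]; exact ⟨hj, h⟩
          have : 0 ≤ Y.mulVec u j := by
            have := (mem_inter.mp hj2).2
            simpa [hpat] using this
          exact mul_nonneg h this
        · have hni : j ∉ s ∩ pat u := by
            rw [hAeq, mem_filter]; push_neg; intro _; linarith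
          have : ¬ (0 ≤ Y.mulVec u j) := by
            intro h2
            exact hni (mem_inter.mpr ⟨hj, by simpa [hpat] using h2⟩)
          exact le_of_lt (mul_pos_of_neg_of_neg h (not_le.mp this))
      have hstrict : 0 < c i * Y.mulVec u i := by
        have hni : i ∉ s ∩ pat u := by
          rw [hAeq, mem_filter]; push_neg; intro _; linarith
        have : ¬ (0 ≤ Y.mulVec u i) := by
          intro h
          exact hni (mem_inter.mpr ⟨hi, by simpa [hpat] using h⟩)
        exact mul_pos_of_neg_of_neg hineg (not_le.mp this)
      have : 0 < ∑ j ∈ s, c j * Y.mulVec u j := by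
        refine Finset.sum_pos' hterm ⟨i, hi, hstrict⟩
      rw [hdot u] at this; exact lt_irrefl _ this
    have : c ↑i0 = 0 := by
      rcases lt_trichotomy (c ↑i0) 0 with h | h | h
      · exact absurd h (hnoneg _ i0.2)
      · exact h
      · exact absurd h (hnopos _ i0.2)
    rw [hc] at this
    simp only [i0.2, dif_pos] at this
    exact hg0 (by simpa using this)
  calc (signPatterns Y).ncard ≤ 𝒜.card := h1
    _ ≤ 𝒜.shatterer.card := Finset.card_le_card_shatterer _
    _ ≤ ∑ k ∈ Iic 𝒜.vcDim, (Fintype.card (Fin n)).choose k :=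
        Finset.card_shatterer_le_sum_vcDim
    _ ≤ ∑ k ∈ Iic Y.rank, n.choose k := by
        rw [Fintype.card_fin]
        exact Finset.sum_le_sum_of_subset (Iic_subset_Iic.mpr hvc)


/-- **Sign-pattern count bound.** For `n ≥ 2` and `r = rank(Y) ≥ 1`,
the number `ℓ` of distinct ReLU sign-pattern matrices of `Y` satisfies
`ℓ ≤ 2r(e(n−1)/r)^r`. -/
theorem sign_pattern_count_bound {n d : ℕ} (Y : Matrix (Fin n) (Fin d) ℝ)
    (hn : 2 ≤ n) (hr : 1 ≤ Y.rank) :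
    ((signPatterns Y).ncard : ℝ) ≤
      2 * (Y.rank : ℝ) * (Real.exp 1 * ((n : ℝ) - 1) / (Y.rank : ℝ)) ^ (Y.rank : ℕ) := by
  classical
  have hrn : Y.rank ≤ n := by
    have := Y.rank_le_card_height
    simpa using this
  calc ((signPatterns Y).ncard : ℝ)
      ≤ ((∑ k ∈ Iic Y.rank, n.choose k : ℕ) : ℝ) := by exact_mod_cast countA Y
    _ ≤ 2 * (Y.rank : ℝ) * (Real.exp 1 * ((n : ℝ) - 1) / (Y.rank : ℝ)) ^ (Y.rank : ℕ) :=
        countB n Y.rank hn hr hrn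
end

section
/- Let Y ∈ ℝ^{n×d}, x* ∈ ℝ^n, β > 0, and let D_1, …, D_ℓ be the ReLU sign-pattern matrices of Y. Then for every m ≥ 1, the convex dual optimal value d* is a lower bound on the primal optimal value: d* ≤ p*_m. -/
open Matrix Finset

namespace WD

variable {k n d : ℕ}

/-- The identity map into Euclidean space, used to transfer norm facts to `l2`. -/
noncomputable def toE (x : Fin k → ℝ) : EuclideanSpace ℝ (Fin k) := WithLp.toLp 2 x

lemma l2_eq (x : Fin k → ℝ) : l2 x = ‖toE x‖ := by
  rw [EuclideanSpace.norm_eq]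
  simp [l2, toE, sq_abs]

lemma l2_nonneg (x : Fin k → ℝ) : 0 ≤ l2 x := Real.sqrt_nonneg _

lemma toE_sum {ι} (s : Finset ι) (f : ι → Fin k → ℝ) :
    toE (∑ j ∈ s, f j) = ∑ j ∈ s, toE (f j) := by
  unfold toE; exact WithLp.toLp_sum ..

lemma l2_smul (c : ℝ) (x : Fin k → ℝ) : l2 (c • x) = |c| * l2 x := by
  rw [l2_eq, l2_eq]
  have h : toE (c • x) = c • toE x := rfl
  rw [h, norm_smul, Real.norm_eq_abs]

lemma l2_sum_le {ι} (s : Finset ι) (f : ι → Fin k → ℝ) :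
    l2 (∑ j ∈ s, f j) ≤ ∑ j ∈ s, l2 (f j) := by
  rw [l2_eq, toE_sum]
  refine le_trans (norm_sum_le _ _) ?_
  exact le_of_eq (Finset.sum_congr rfl fun j _ => (l2_eq (f j)).symm)

lemma l2_sum_smul_le {ι} (s : Finset ι) (c : ι → ℝ) (f : ι → Fin k → ℝ)
    (hc : ∀ j ∈ s, 0 ≤ c j) :
    l2 (∑ j ∈ s, c j • f j) ≤ ∑ j ∈ s, c j * l2 (f j) := by
  refine le_trans (l2_sum_le s _) (le_of_eq ?_)
  exact Finset.sum_congr rfl fun j hj => by rw [l2_smul, abs_of_nonneg (hc j hj)]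

/-- The ReLU sign-pattern matrix of `Y u`. -/
noncomputable def pat (Y : Matrix (Fin n) (Fin d) ℝ) (u : Fin d → ℝ) :
    Matrix (Fin n) (Fin n) ℝ :=
  Matrix.diagonal (fun i => if 0 ≤ Y.mulVec u i then (1 : ℝ) else 0)

lemma pat_mem (Y : Matrix (Fin n) (Fin d) ℝ) (u : Fin d → ℝ) :
    pat Y u ∈ signPatterns Y := by
  set c := max (l2 u) 1 with hc
  have hc1 : (1:ℝ) ≤ c := le_max_right _ _
  have hc0 : (0:ℝ) < c := lt_of_lt_of_le one_pos hc1
  refine ⟨c⁻¹ • u, ?_, ?_⟩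
  · rw [l2_smul, abs_of_nonneg (by positivity)]
    rw [inv_mul_le_iff₀ hc0]
    calc l2 u ≤ c := le_max_left _ _
      _ = c * 1 := by ring
  · unfold pat
    have hfun : (fun i => if 0 ≤ Y.mulVec u i then (1:ℝ) else 0)
        = fun i => if 0 ≤ Y.mulVec (c⁻¹ • u) i then (1:ℝ) else 0 := by
      funext i
      have h1 : Y.mulVec (c⁻¹ • u) i = c⁻¹ * Y.mulVec u i := by
        rw [Matrix.mulVec_smul]; rfl
      have h2 : (0 ≤ Y.mulVec (c⁻¹ • u) i) ↔ (0 ≤ Y.mulVec u i) := by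
        rw [h1]
        exact mul_nonneg_iff_of_pos_left (by positivity)
      rw [if_congr h2.symm rfl rfl]
    rw [hfun]

lemma pat_mulVec (Y : Matrix (Fin n) (Fin d) ℝ) (u : Fin d → ℝ) :
    (pat Y u).mulVec (Y.mulVec u) = relu (Y.mulVec u) := by
  funext i
  rw [pat, Matrix.mulVec_diagonal]
  by_cases h : 0 ≤ Y.mulVec u i
  · simp [relu, h, max_eq_left h]
  · simp [relu, h, max_eq_right (le_of_lt (not_le.mp h))]

lemma two_smul_sub_one_mulVec (M : Matrix (Fin n) (Fin n) ℝ) (x : Fin n → ℝ) (i : Fin n) :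
    ((2 • M - 1).mulVec x) i = 2 * (M.mulVec x) i - x i := by
  rw [Matrix.sub_mulVec, Matrix.smul_mulVec, Matrix.one_mulVec]
  simp

lemma pat_feas (Y : Matrix (Fin n) (Fin d) ℝ) (u : Fin d → ℝ) (i : Fin n) :
    0 ≤ ((2 • pat Y u - 1).mulVec (Y.mulVec u)) i := by
  rw [two_smul_sub_one_mulVec, pat, Matrix.mulVec_diagonal]
  by_cases h : 0 ≤ Y.mulVec u i
  · simp [h]; linarith
  · simp [h]; linarith [not_le.mp h]

lemma mulVec_mulVec_sum {ι} (Y : Matrix (Fin n) (Fin d) ℝ)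
    (M : Matrix (Fin n) (Fin n) ℝ) (s : Finset ι) (c : ι → ℝ) (g : ι → Fin d → ℝ) :
    M.mulVec (Y.mulVec (∑ j ∈ s, c j • g j))
      = ∑ j ∈ s, c j • M.mulVec (Y.mulVec (g j)) := by
  have key : ∀ x : Fin d → ℝ,
      M.mulVec (Y.mulVec x) = (M.mulVecLin.comp Y.mulVecLin) x := by
    intro x
    simp only [LinearMap.comp_apply, Matrix.mulVecLin_apply]
  rw [key, map_sum]
  refine Finset.sum_congr rfl fun j _ => ?_
  rw [_root_.map_smul, key]

lemma feas_sum {ι} (Y : Matrix (Fin n) (Fin d) ℝ) (M : Matrix (Fin n) (Fin n) ℝ)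
    (s : Finset ι) (c : ι → ℝ) (g : ι → Fin d → ℝ)
    (hc : ∀ j ∈ s, 0 ≤ c j)
    (h : ∀ j ∈ s, ∀ i, 0 ≤ ((2 • M - 1).mulVec (Y.mulVec (g j))) i) (i : Fin n) :
    0 ≤ ((2 • M - 1).mulVec (Y.mulVec (∑ j ∈ s, c j • g j))) i := by
  rw [mulVec_mulVec_sum]
  rw [Finset.sum_apply]
  refine Finset.sum_nonneg fun j hj => ?_
  have : (c j • (2 • M - 1).mulVec (Y.mulVec (g j))) i
      = c j * ((2 • M - 1).mulVec (Y.mulVec (g j))) i := rfl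
  rw [this]
  exact mul_nonneg (hc j hj) (h j hj i)

end WD

/-- **Weak duality.** The convex dual optimal value `d*` is a lower
bound on the primal optimal value `p*_m` for every `m ≥ 1`. -/
theorem weak_duality {n d ℓ : ℕ} (Y : Matrix (Fin n) (Fin d) ℝ) (xs : Fin n → ℝ)
    (β : ℝ) (hβ : 0 < β) (D : Fin ℓ → Matrix (Fin n) (Fin n) ℝ)
    (hinj : Function.Injective D) (hrange : Set.range D = signPatterns Y) :
    ∀ m, 1 ≤ m → dStar Y xs β D ≤ pStar Y xs β m := by
  intro m hm
  classical
  have hbdd : BddBelow { c | ∃ w z : Fin ℓ → Fin d → ℝ,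
      dualFeasible Y D w ∧ dualFeasible Y D z ∧ c = dualObj Y xs β D w z } := by
    refine ⟨0, ?_⟩
    rintro c ⟨w, z, -, -, rfl⟩
    unfold dualObj
    have h1 : 0 ≤ (1/2 : ℝ) * l2 ((∑ i, (D i).mulVec (Y.mulVec (w i - z i))) - xs) ^ 2 :=
      mul_nonneg (by norm_num) (sq_nonneg _)
    have h2 : 0 ≤ β * ∑ i, (l2 (w i) + l2 (z i)) :=
      mul_nonneg hβ.le (Finset.sum_nonneg fun i _ =>
        add_nonneg (WD.l2_nonneg _) (WD.l2_nonneg _))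
    linarith
  refine le_csInf ⟨primalObj Y xs β m 0 0, 0, 0, rfl⟩ ?_
  rintro c ⟨u, v, rfl⟩
  have hpat : ∀ j, ∃ i, D i = WD.pat Y (u j) := by
    intro j
    have : WD.pat Y (u j) ∈ Set.range D := by rw [hrange]; exact WD.pat_mem Y (u j)
    exact this
  choose idx hidx using hpat
  let S : Fin ℓ → Finset (Fin m) := fun i => univ.filter (fun j => idx j = i)
  let w : Fin ℓ → Fin d → ℝ := fun i => ∑ j ∈ S i, max (v j) 0 • u j
  let z : Fin ℓ → Fin d → ℝ := fun i => ∑ j ∈ S i, max (-v j) 0 • u j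
  have hwf : dualFeasible Y D w := by
    intro i k
    refine WD.feas_sum Y (D i) (S i) _ _ (fun j _ => le_max_right _ _) ?_ k
    intro j hj p
    have hji : idx j = i := (Finset.mem_filter.mp hj).2
    rw [← hji, hidx j]
    exact WD.pat_feas Y (u j) p
  have hzf : dualFeasible Y D z := by
    intro i k
    refine WD.feas_sum Y (D i) (S i) _ _ (fun j _ => le_max_right _ _) ?_ k
    intro j hj p
    have hji : idx j = i := (Finset.mem_filter.mp hj).2
    rw [← hji, hidx j]
    exact WD.pat_feas Y (u j) p
  have hkey : (∑ i, (D i).mulVec (Y.mulVec (w i - z i)))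
      = ∑ j, v j • relu (Y.mulVec (u j)) := by
    rw [← Finset.sum_fiberwise univ idx (fun j => v j • relu (Y.mulVec (u j)))]
    refine Finset.sum_congr rfl fun i _ => ?_
    have hwz : w i - z i = ∑ j ∈ S i, v j • u j := by
      show (∑ j ∈ S i, max (v j) 0 • u j) - (∑ j ∈ S i, max (-v j) 0 • u j)
          = ∑ j ∈ S i, v j • u j
      rw [← Finset.sum_sub_distrib]
      refine Finset.sum_congr rfl fun j _ => ?_
      rw [← sub_smul]
      congr 1
      rcases le_total 0 (v j) with h | h
      · rw [max_eq_left h, max_eq_right (neg_nonpos.mpr h)]; ring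
      · rw [max_eq_right h, max_eq_left (neg_nonneg.mpr h)]; ring
    rw [hwz, WD.mulVec_mulVec_sum]
    refine Finset.sum_congr rfl fun j hj => ?_
    have hji : idx j = i := (Finset.mem_filter.mp hj).2
    rw [← hji, hidx j, WD.pat_mulVec]
  have hobj : dualObj Y xs β D w z ≤ primalObj Y xs β m u v := by
    unfold dualObj primalObj
    rw [hkey]
    have hterm : ∑ i, (l2 (w i) + l2 (z i)) ≤ ∑ j, |v j| * l2 (u j) := by
      calc ∑ i, (l2 (w i) + l2 (z i))
          ≤ ∑ i, ∑ j ∈ S i, |v j| * l2 (u j) := by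
            refine Finset.sum_le_sum fun i _ => ?_
            have hw2 : l2 (w i) ≤ ∑ j ∈ S i, max (v j) 0 * l2 (u j) :=
              WD.l2_sum_smul_le (S i) _ _ (fun j _ => le_max_right _ _)
            have hz2 : l2 (z i) ≤ ∑ j ∈ S i, max (-v j) 0 * l2 (u j) :=
              WD.l2_sum_smul_le (S i) _ _ (fun j _ => le_max_right _ _)
            have hsum : ∑ j ∈ S i, max (v j) 0 * l2 (u j)
                  + ∑ j ∈ S i, max (-v j) 0 * l2 (u j)
                = ∑ j ∈ S i, |v j| * l2 (u j) := by
              rw [← Finset.sum_add_distrib]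
              refine Finset.sum_congr rfl fun j _ => ?_
              rcases le_total 0 (v j) with h | h
              · rw [max_eq_left h, max_eq_right (neg_nonpos.mpr h), abs_of_nonneg h]; ring
              · rw [max_eq_right h, max_eq_left (neg_nonneg.mpr h), abs_of_nonpos h]; ring
            linarith
        _ = ∑ j, |v j| * l2 (u j) := Finset.sum_fiberwise univ idx _
    have hAMGM : ∑ j, |v j| * l2 (u j) ≤ (1/2) * ∑ j, (l2 (u j) ^ 2 + |v j| ^ 2) := by
      rw [Finset.mul_sum]
      refine Finset.sum_le_sum fun j _ => ?_
      nlinarith [sq_nonneg (l2 (u j) - |v j|), WD.l2_nonneg (u j), abs_nonneg (v j)]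
    have hβ2 : β * ∑ i, (l2 (w i) + l2 (z i))
        ≤ (β/2) * ∑ j, (l2 (u j) ^ 2 + |v j| ^ 2) := by
      calc β * ∑ i, (l2 (w i) + l2 (z i))
          ≤ β * ((1/2) * ∑ j, (l2 (u j) ^ 2 + |v j| ^ 2)) :=
            mul_le_mul_of_nonneg_left (le_trans hterm hAMGM) hβ.le
        _ = (β/2) * ∑ j, (l2 (u j) ^ 2 + |v j| ^ 2) := by ring
    linarith
  exact le_trans (csInf_le hbdd ⟨w, z, hwf, hzf, rfl⟩) hobj
end
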